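/- arXiv:1609.08837 — 3 statements merged into one kernel-verified Lean document; each statement's English description precedes it below -/
import Mathlib

section
/- Let (A,E) = *_D (A_k, E_k) be a reduced amalgamated free product and P_k ∈ L(Y) the canonical projections. Then: (i) each P_k commutes with D; (ii) every a ∈ A_k satisfies P_k^⊥ a P_k^⊥ = E(a) P_k^⊥ and a° P_k^⊥ = P_k° a P_k^⊥, where a° = a − E(a) and P_k° = P_k − e_{A_k}; (iii) the compression L(Y) → L(η_k A_k) ≅ A_k by the Jones projection e_{A_k} defines a conditional expectation from ΔT(A,E) onto A_k extending E_{A_k}. -/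
/-! ### Common interface definitions for C*-algebra theory -/

noncomputable section

open scoped ENNReal NNReal

universe u v w

/-- An element of a *-algebra is *C*-positive* if it is of the form `star y * y`. -/
def IsCStarPos {A : Type*} [Mul A] [Star A] (x : A) : Prop := ∃ y : A, x = star y * y

/-- The canonical C*-norm of a matrix over a C*-algebra, computed via the action of the
matrix algebra on the Hilbert module `Aⁿ`. -/
def cstarMatNorm {A : Type*} [Norm A] [NonUnitalRing A] [Star A] {n : ℕ}
    (M : Matrix (Fin n) (Fin n) A) : ℝ :=
  sSup { r : ℝ | 0 ≤ r ∧ ∃ b : Fin n → A, ‖∑ i, star (b i) * b i‖ ≤ 1 ∧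
    r ^ 2 = ‖∑ i, star (∑ j, M i j * b j) * (∑ j, M i j * b j)‖ }

/-- A linear map between *-algebras is completely positive if all of its matrix
amplifications are positive; equivalently (as formulated here, avoiding norms on matrix
algebras), all sums `∑ᵢⱼ bᵢ* φ(aᵢ* aⱼ) bⱼ` are positive. -/
def IsCPMap {A B : Type*} [NonUnitalRing A] [Star A] [NonUnitalRing B] [Star B]
    [Module ℂ A] [Module ℂ B] (φ : A →ₗ[ℂ] B) : Prop :=
  ∀ (n : ℕ) (a : Fin n → A) (b : Fin n → B),
    IsCStarPos (∑ i, ∑ j, star (b i) * φ (star (a i) * a j) * b j)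

/-- A (bounded, completely positive, star-preserving) conditional expectation onto the
subalgebra `ι : D → A` of a unital C*-algebra `A`. -/
structure CondExp (D : Type u) (A : Type v) [CStarAlgebra D] [CStarAlgebra A]
    (ι : D →⋆ₐ[ℂ] A) : Type (max u v) where
  toMap : A →ₗ[ℂ] D
  map_star : ∀ a, toMap (star a) = star (toMap a)
  retract : ∀ d, toMap (ι d) = d
  bimod : ∀ (d : D) (a : A) (d' : D), toMap (ι d * a * ι d') = d * toMap a * d'
  cp : IsCPMap toMap
  contractive : ∀ a, ‖toMap a‖ ≤ ‖a‖

/-- Nondegeneracy (= faithfulness of the GNS representation) of a conditional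
expectation. -/
def CondExp.Nondeg {D : Type u} {A : Type v} [CStarAlgebra D] [CStarAlgebra A]
    {ι : D →⋆ₐ[ℂ] A} (E : CondExp D A ι) : Prop :=
  ∀ a : A, (∀ b : A, E.toMap (star (a * b) * (a * b)) = 0) → a = 0

/-- A subset of a unital C*-algebra generates it (as a C*-algebra) if the star subalgebra
it generates is dense. -/
def GeneratesCStar {A : Type*} [CStarAlgebra A] (S : Set A) : Prop :=
  Dense ((StarAlgebra.adjoin ℂ S : StarSubalgebra ℂ A) : Set A)

/-- A subset of a C*-algebra generates it as a non-unital C*-algebra if the non-unital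
star subalgebra it generates is dense. -/
def GeneratesCStarNU {A : Type*} [NonUnitalCStarAlgebra A] (S : Set A) : Prop :=
  Dense ((NonUnitalStarAlgebra.adjoin ℂ S : NonUnitalStarSubalgebra ℂ A) : Set A)

/-- The reduced amalgamated free product `(A, E) = *_D (A_k, E_k)` of a family of unital
inclusions `D ⊆ A k` with conditional expectations `E k`, realized on the C*-algebra
`FP`: it is generated by copies of the `A k` agreeing on `D`, carries a nondegenerate
conditional expectation `E` onto `D` restricting to the `E k` on each `A k`, and `E`
vanishes on all reduced words.  These properties determine `(FP, E)` up to isomorphism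
fixing the `A k`. -/
structure ReducedAFP {I : Type w} {D : Type u} [CStarAlgebra D] {A : I → Type u}
    [∀ i, CStarAlgebra (A i)] (ι : ∀ i, D →⋆ₐ[ℂ] A i) (Ek : ∀ i, CondExp D (A i) (ι i))
    (FP : Type u) [CStarAlgebra FP] : Type (max u w) where
  incl : ∀ i, A i →⋆ₐ[ℂ] FP
  incl_injective : ∀ i, Function.Injective (incl i)
  inclD : D →⋆ₐ[ℂ] FP
  compat : ∀ i d, incl i (ι i d) = inclD d
  generates : GeneratesCStar (⋃ i, Set.range (incl i))
  Exp : CondExp D FP inclD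
  Exp_restrict : ∀ i a, Exp.toMap (incl i a) = (Ek i).toMap a
  Exp_nondeg : Exp.Nondeg
  freeness : ∀ (m : ℕ) (idx : Fin (m + 1) → I) (a : ∀ k, A (idx k)),
    (∀ k, (Ek (idx k)).toMap (a k) = 0) →
    (∀ k : Fin m, idx k.castSucc ≠ idx k.succ) →
    Exp.toMap ((List.ofFn fun k => incl (idx k) (a k)).prod) = 0

/-- The canonical conditional expectation `E_{A_k} : A → A_k` of a reduced amalgamated
free product onto one of its free factors: it restricts to the identity on `A_k`, kills
all reduced words of length `≥ 2` as well as the length-one reduced words from the other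
factors, and satisfies `E = E_k ∘ E_{A_k}`. -/
structure FactorExp {I : Type w} {D : Type u} [CStarAlgebra D] {A : I → Type u}
    [∀ i, CStarAlgebra (A i)] {ι : ∀ i, D →⋆ₐ[ℂ] A i} {Ek : ∀ i, CondExp D (A i) (ι i)}
    {FP : Type u} [CStarAlgebra FP] (R : ReducedAFP ι Ek FP) (k : I) :
    Type (max u w) where
  toCondExp : CondExp (A k) FP (R.incl k)
  factors : ∀ x : FP, R.Exp.toMap x = (Ek k).toMap (toCondExp.toMap x)
  kills : ∀ (m : ℕ) (idx : Fin (m + 1) → I) (a : ∀ j, A (idx j)),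
    (∀ j, (Ek (idx j)).toMap (a j) = 0) →
    (∀ j : Fin m, idx j.castSucc ≠ idx j.succ) → (1 ≤ m ∨ idx 0 ≠ k) →
    toCondExp.toMap ((List.ofFn fun j => R.incl (idx j) (a j)).prod) = 0

/-- The Bass–Serre algebra `ΔT(A, E)` of a reduced amalgamated free product `R`,
characterized by its universal property (Corollary 4.4 of the paper): it contains the
reduced amalgamated free product `FP` faithfully, carries pairwise orthogonal projections
`P k` (summing to `1` when `I` is finite) whose complements `e_k = 1 - P k` satisfy the
Jones relation `e_k a e_k = E_k(a) e_k` for `a ∈ A_k`, it is generated by `FP` together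
with the `P k`, and it is universal for these relations. -/
structure BassSerre {I : Type w} {D : Type u} [CStarAlgebra D] {A : I → Type u}
    [∀ i, CStarAlgebra (A i)] {ι : ∀ i, D →⋆ₐ[ℂ] A i} {Ek : ∀ i, CondExp D (A i) (ι i)}
    {FP : Type u} [CStarAlgebra FP] (R : ReducedAFP ι Ek FP)
    (Δ : Type u) [CStarAlgebra Δ] : Type (max (u + 1) w) where
  emb : FP →⋆ₐ[ℂ] Δ
  emb_injective : Function.Injective emb
  P : I → Δ
  P_sa : ∀ i, star (P i) = P i
  P_idem : ∀ i, P i * P i = P i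
  P_orth : ∀ i j, i ≠ j → P i * P j = 0
  P_sum : ∀ s : Finset I, (∀ i, i ∈ s) → ∑ i ∈ s, P i = 1
  jones : ∀ i (a : A i),
    (1 - P i) * emb (R.incl i a) * (1 - P i) = emb (R.inclD ((Ek i).toMap a)) * (1 - P i)
  generates : GeneratesCStar (Set.range emb ∪ Set.range P)
  universal : ∀ (C : Type u) [CStarAlgebra C] (ψ : ∀ i, A i →⋆ₐ[ℂ] C),
    (∀ i j d, ψ i (ι i d) = ψ j (ι j d)) → ∀ q : I → C,
    (∀ i, star (q i) = q i) → (∀ i, q i * q i = q i) → (∀ i j, i ≠ j → q i * q j = 0) →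
    (∀ s : Finset I, (∀ i, i ∈ s) → ∑ i ∈ s, q i = 1) →
    (∀ i a, (1 - q i) * ψ i a * (1 - q i) = ψ i (ι i ((Ek i).toMap a)) * (1 - q i)) →
    ∃! ρ : Δ →⋆ₐ[ℂ] C, (∀ i a, ρ (emb (R.incl i a)) = ψ i a) ∧ ∀ i, ρ (P i) = q i

/-- Nuclearity of a C*-algebra: the identity map is a pointwise-norm limit of
compositions of completely positive contractions through matrix algebras. -/
def IsNuclearCStar (A : Type u) [NonUnitalCStarAlgebra A] : Prop :=
  ∀ (F : Finset A) (ε : ℝ), 0 < ε → ∃ (n : ℕ) (φ : A →ₗ[ℂ] Matrix (Fin n) (Fin n) ℂ)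
    (ψ : Matrix (Fin n) (Fin n) ℂ →ₗ[ℂ] A), IsCPMap φ ∧ IsCPMap ψ ∧
    (∀ a, cstarMatNorm (φ a) ≤ ‖a‖) ∧ (∀ M, ‖ψ M‖ ≤ cstarMatNorm M) ∧
    ∀ a ∈ F, ‖ψ (φ a) - a‖ ≤ ε

/-- A nuclear embedding of a C*-algebra into another C*-algebra: an injective
*-homomorphism which is a pointwise-norm limit of completely positive contractions
factoring through matrix algebras.  By Kirchberg's theorem, a C*-algebra admits such
an embedding if and only if it is exact. -/
structure NuclearEmbedding (A : Type u) [NonUnitalCStarAlgebra A] : Type (u + 1) where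
  B : Type u
  [instB : NonUnitalCStarAlgebra B]
  θ : A →⋆ₙₐ[ℂ] B
  injective : Function.Injective θ
  nuclear : ∀ (F : Finset A) (ε : ℝ), 0 < ε → ∃ (n : ℕ)
    (φ : A →ₗ[ℂ] Matrix (Fin n) (Fin n) ℂ) (ψ : Matrix (Fin n) (Fin n) ℂ →ₗ[ℂ] B),
    IsCPMap φ ∧ IsCPMap ψ ∧ (∀ a, cstarMatNorm (φ a) ≤ ‖a‖) ∧
    (∀ M, ‖ψ M‖ ≤ cstarMatNorm M) ∧ ∀ a ∈ F, ‖ψ (φ a) - θ a‖ ≤ ε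

/-- Exactness of a C*-algebra, in the form of Kirchberg's nuclear-embeddability
characterization. -/
def IsExactCStar (A : Type u) [NonUnitalCStarAlgebra A] : Prop :=
  Nonempty (NuclearEmbedding A)

/-- `A` has the completely bounded approximation property with constant `C`: the
identity is a pointwise-norm limit of finite-rank maps which are completely bounded
with cb-norm at most `C`. -/
def CBAPBound (A : Type u) [NonUnitalCStarAlgebra A] (C : ℝ) : Prop :=
  ∀ (F : Finset A) (ε : ℝ), 0 < ε → ∃ φ : A →ₗ[ℂ] A,
    FiniteDimensional ℂ (LinearMap.range φ) ∧
    (∀ (n : ℕ) (M : Matrix (Fin n) (Fin n) A),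
      cstarMatNorm (M.map φ) ≤ C * cstarMatNorm M) ∧
    ∀ a ∈ F, ‖φ a - a‖ ≤ ε

/-- The Haagerup constant `Λ_cb(A)` of a C*-algebra (`∞` if `A` fails the CBAP). -/
def LambdaCB (A : Type u) [NonUnitalCStarAlgebra A] : ℝ≥0∞ :=
  sInf {c : ℝ≥0∞ | ∃ r : ℝ≥0, c = (r : ℝ≥0∞) ∧ CBAPBound A (r : ℝ)}

end


/-! ### Hilbert C*-modules (interface) -/

noncomputable section

universe u v w

/-- Interface for a Hilbert C*-module structure over the C*-algebra `D` on the complex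
Banach space `X`: a right `D`-action and a `D`-valued inner product, compatible with the
norm of `X`. -/
structure HilbMod (D : Type u) [CStarAlgebra D] (X : Type v) [NormedAddCommGroup X]
    [NormedSpace ℂ X] [CompleteSpace X] : Type (max u v) where
  rsmul : X →ₗ[ℂ] D →ₗ[ℂ] X
  inner : X → X → D
  inner_add_right : ∀ x y z, inner x (y + z) = inner x y + inner x z
  inner_smul_right : ∀ (c : ℂ) (x y : X), inner x (c • y) = c • inner x y
  inner_rsmul_right : ∀ x y d, inner x (rsmul y d) = inner x y * d
  star_inner : ∀ x y, star (inner x y) = inner y x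
  inner_pos : ∀ x, IsCStarPos (inner x x)
  norm_inner : ∀ x, ‖x‖ ^ 2 = ‖inner x x‖
  rsmul_assoc : ∀ x d e, rsmul (rsmul x d) e = rsmul x (d * e)
  rankOne_exists : ∀ ξ η : X, ∃ T : X →L[ℂ] X, ∀ ζ, T ζ = rsmul ξ (inner η ζ)

namespace HilbMod

variable {D : Type u} [CStarAlgebra D] {X : Type v} [NormedAddCommGroup X]
  [NormedSpace ℂ X] [CompleteSpace X] {Y : Type w} [NormedAddCommGroup Y]
  [NormedSpace ℂ Y] [CompleteSpace Y]

/-- An operator between Hilbert C*-modules is adjointable if it has an adjoint with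
respect to the inner products. -/
def AdjointablePair (MX : HilbMod D X) (MY : HilbMod D Y) (T : X →L[ℂ] Y) : Prop :=
  ∃ S : Y →L[ℂ] X, ∀ x y, MY.inner (T x) y = MX.inner x (S y)

/-- Adjointable operators on a Hilbert C*-module. -/
def Adjointable (M : HilbMod D X) (T : X →L[ℂ] X) : Prop := AdjointablePair M M T

/-- The adjoint of an (adjointable) operator. -/
def adj (M : HilbMod D X) (T : X →L[ℂ] X) : X →L[ℂ] X :=
  letI := Classical.propDecidable (M.Adjointable T)
  if h : M.Adjointable T then h.choose else 0

/-- "Rank-one" operators `θ_{ξ,η} : ζ ↦ ξ ⬝ ⟨η, ζ⟩` between Hilbert C*-modules.-/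
def IsRankOnePair (MX : HilbMod D X) (MY : HilbMod D Y) (T : X →L[ℂ] Y) : Prop :=
  ∃ (ξ : Y) (η : X), ∀ ζ, T ζ = MY.rsmul ξ (MX.inner η ζ)

/-- Compact operators between Hilbert C*-modules: norm limits of sums of rank-one
operators. -/
def IsCompactPair (MX : HilbMod D X) (MY : HilbMod D Y) (T : X →L[ℂ] Y) : Prop :=
  T ∈ closure
    ((Submodule.span ℂ {S : X →L[ℂ] Y | IsRankOnePair MX MY S} : Submodule ℂ _) : Set _)

/-- Compact operators on a Hilbert C*-module. -/
def IsCompactOp (M : HilbMod D X) (T : X →L[ℂ] X) : Prop := IsCompactPair M M T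

end HilbMod

/-- A representation of the C*-algebra `A` by adjointable operators on a Hilbert
C*-module (not necessarily unital). -/
structure RepOn (A : Type w) [NonUnitalCStarAlgebra A] {D : Type u} [CStarAlgebra D]
    {X : Type v} [NormedAddCommGroup X] [NormedSpace ℂ X] [CompleteSpace X]
    (M : HilbMod D X) : Type (max u v w) where
  act : A →ₗ[ℂ] X →L[ℂ] X
  act_mul : ∀ a b, act (a * b) = (act a).comp (act b)
  act_star : ∀ (a : A) (x y : X), M.inner (act a x) y = M.inner x (act (star a) y)
  act_rsmul : ∀ (a : A) (x : X) (d : D), act a (M.rsmul x d) = M.rsmul (act a x) d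

/-- A unital representation. -/
def RepOn.Unital {A : Type w} [CStarAlgebra A] {D : Type u} [CStarAlgebra D] {X : Type v}
    [NormedAddCommGroup X] [NormedSpace ℂ X] [CompleteSpace X] {M : HilbMod D X}
    (π : RepOn A M) : Prop := π.act 1 = ContinuousLinearMap.id ℂ X

/-- Faithfulness (injectivity) of a representation. -/
def RepOn.Faithful {A : Type w} [NonUnitalCStarAlgebra A] {D : Type u} [CStarAlgebra D]
    {X : Type v} [NormedAddCommGroup X] [NormedSpace ℂ X] [CompleteSpace X]
    {M : HilbMod D X} (π : RepOn A M) : Prop := ∀ a, π.act a = 0 → a = 0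

end


/-! ### GNS representations of conditional expectations (interface) -/

noncomputable section

universe u v w

/-- The GNS representation `(X, φ_X, ξ₀)` of a conditional expectation `E : A → D`:
a Hilbert `D`-module `X` with a unital representation of `A` and a cyclic vector `ξ₀`
implementing `E`, together with the Jones projection `e_D : x ↦ ξ₀ ⬝ ⟨ξ₀, x⟩`. -/
structure GNSRep {D : Type u} {A : Type w} [CStarAlgebra D] [CStarAlgebra A]
    (ι : D →⋆ₐ[ℂ] A) (E : CondExp D A ι) (X : Type v) [NormedAddCommGroup X]
    [NormedSpace ℂ X] [CompleteSpace X] : Type (max u v w) where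
  mod : HilbMod D X
  rep : RepOn A mod
  rep_unital : rep.Unital
  cyc : X
  cyclic : Dense (Set.range fun a : A => rep.act a cyc)
  inner_cyc : ∀ a b : A, mod.inner (rep.act a cyc) (rep.act b cyc) = E.toMap (star a * b)
  cyc_rsmul : ∀ d : D, mod.rsmul cyc d = rep.act (ι d) cyc
  jones : X →L[ℂ] X
  jones_apply : ∀ x, jones x = mod.rsmul cyc (mod.inner cyc x)

namespace GNSRep

variable {D : Type u} {A : Type w} [CStarAlgebra D] [CStarAlgebra A] {ι : D →⋆ₐ[ℂ] A}
  {E : CondExp D A ι} {X : Type v} [NormedAddCommGroup X] [NormedSpace ℂ X]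
  [CompleteSpace X]

/-- The orthogonal complement `X° = X ⊖ ξ₀D` of the cyclic submodule. -/
def XcircSet (G : GNSRep ι E X) : Set X := {x | G.mod.inner G.cyc x = 0}

/-- Rank-one operators with both legs in `X°`. -/
def IsRankOneCirc (G : GNSRep ι E X) (T : X →L[ℂ] X) : Prop :=
  ∃ ξ ∈ G.XcircSet, ∃ η ∈ G.XcircSet, ∀ ζ, T ζ = G.mod.rsmul ξ (G.mod.inner η ζ)

/-- The compact operators `K(X°) ⊆ K(X)`, i.e. limits of sums of rank-one operators
with legs in `X°`. -/
def IsCompactCirc (G : GNSRep ι E X) (T : X →L[ℂ] X) : Prop :=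
  T ∈ closure
    ((Submodule.span ℂ {S : X →L[ℂ] X | G.IsRankOneCirc S} : Submodule ℂ _) : Set _)

end GNSRep

end


/-! ### Statement 2

Properties of the canonical projections `P_k ∈ L(Y)` of the Bass–Serre algebra
`ΔT(A,E) = C*(φ_Y(A), {P_k})`: they commute with `D`; `P_k^⊥ a P_k^⊥ = E(a) P_k^⊥`
and `a° P_k^⊥ = P_k° a P_k^⊥` for `a ∈ A_k` (where `P_k° = P_k - e_{A_k}`); and
compression by the Jones projection `e_{A_k}` defines a conditional expectation
`ΔT(A,E) → A_k` extending `E_{A_k}`.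

Since `L(Y) = L(⊞_k Y_k) ≅ ∏_k L(Y_k)`, the concrete realization of `ΔT(A,E)` on `Y`
is encoded as a faithful family of representations `σ_k` on the GNS modules `Y_k` of
the canonical conditional expectations `E_{A_k} : A → A_k`, under which the copy of
`A` acts by the GNS representations, and the `P_k` act as the projections onto the
closed submodules spanned by `η_k A_k` and the reduced words beginning in `A_k°`. -/

noncomputable section

universe u v w

/-- The concrete realization of `ΔT(A,E)` on the Hilbert module `Y = ⊞_k Y_k`. -/
structure ConcreteDeltaT {I : Type w} {D : Type u} [CStarAlgebra D] {A : I → Type u}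
    [∀ i, CStarAlgebra (A i)] {ι : ∀ i, D →⋆ₐ[ℂ] A i} {Ek : ∀ i, CondExp D (A i) (ι i)}
    {FP : Type u} [CStarAlgebra FP] (R : ReducedAFP ι Ek FP)
    (Fexp : ∀ k, FactorExp R k) (Y : I → Type v) [∀ k, NormedAddCommGroup (Y k)]
    [∀ k, NormedSpace ℂ (Y k)] [∀ k, CompleteSpace (Y k)]
    (Gns : ∀ k, GNSRep (R.incl k) (Fexp k).toCondExp (Y k))
    (Δ : Type u) [CStarAlgebra Δ] : Type (max u v w) where
  emb : FP →⋆ₐ[ℂ] Δ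
  emb_injective : Function.Injective emb
  /-- the component representations `σ_k : ΔT(A,E) → L(Y_k)` -/
  σrep : ∀ k, RepOn Δ (Gns k).mod
  σrep_unital : ∀ k, (σrep k).Unital
  σ_emb : ∀ k (x : FP), (σrep k).act (emb x) = (Gns k).rep.act x
  faithful_family : ∀ δ : Δ, (∀ k, (σrep k).act δ = 0) → δ = 0
  P : I → Δ
  P_sa : ∀ k, star (P k) = P k
  P_idem : ∀ k, P k * P k = P k
  /-- `P_k` fixes the vector `η_k` … -/
  P_cyc_self : ∀ k, (σrep k).act (P k) (Gns k).cyc = (Gns k).cyc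
  /-- … kills the vectors `η_j`, `j ≠ k` … -/
  P_cyc_ne : ∀ j k, j ≠ k → (σrep j).act (P k) (Gns j).cyc = 0
  /-- … fixes reduced words beginning in `A_k°` … -/
  P_word_fix : ∀ (j k : I) (m : ℕ) (idx : Fin (m + 1) → I) (a : ∀ t, A (idx t)),
    (∀ t, (Ek (idx t)).toMap (a t) = 0) →
    (∀ t : Fin m, idx t.castSucc ≠ idx t.succ) → idx 0 = k →
    (σrep j).act (P k) ((Gns j).rep.act
        ((List.ofFn fun t => R.incl (idx t) (a t)).prod) (Gns j).cyc) =
      (Gns j).rep.act ((List.ofFn fun t => R.incl (idx t) (a t)).prod) (Gns j).cyc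
  /-- … and kills reduced words beginning elsewhere. -/
  P_word_kill : ∀ (j k : I) (m : ℕ) (idx : Fin (m + 1) → I) (a : ∀ t, A (idx t)),
    (∀ t, (Ek (idx t)).toMap (a t) = 0) →
    (∀ t : Fin m, idx t.castSucc ≠ idx t.succ) → idx 0 ≠ k →
    (σrep j).act (P k) ((Gns j).rep.act
        ((List.ofFn fun t => R.incl (idx t) (a t)).prod) (Gns j).cyc) = 0
  generates : GeneratesCStar (Set.range emb ∪ Set.range P)

namespace Stmt2Aux

variable {I : Type w} {D : Type u} [CStarAlgebra D] {A : I → Type u}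
  [∀ i, CStarAlgebra (A i)] {ι : ∀ i, D →⋆ₐ[ℂ] A i} {Ek : ∀ i, CondExp D (A i) (ι i)}
  {FP : Type u} [CStarAlgebra FP]

/-- The product in `FP` of a word (list of letters from the factors). -/
def wprod (R : ReducedAFP ι Ek FP) (L : List (Σ i, A i)) : FP :=
  (L.map fun p => R.incl p.1 p.2).prod

/-- A word is reduced: all letters are in the kernels of the `E_k` and adjacent
letters come from distinct factors. -/
def Red (Ek : ∀ i, CondExp D (A i) (ι i)) (L : List (Σ i, A i)) : Prop :=
  (∀ p ∈ L, (Ek p.1).toMap p.2 = 0) ∧ (L.map Sigma.fst).IsChain (· ≠ ·)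

/-- Scalars from `D` together with reduced words. -/
def GoodSet (R : ReducedAFP ι Ek FP) : Set FP :=
  Set.range R.inclD ∪ {x | ∃ L, L ≠ [] ∧ Red Ek L ∧ x = wprod R L}

section Words

variable (R : ReducedAFP ι Ek FP)

@[simp] lemma wprod_nil : wprod R ([] : List (Σ i, A i)) = 1 := rfl

@[simp] lemma wprod_cons (p : Σ i, A i) (L : List (Σ i, A i)) :
    wprod R (p :: L) = R.incl p.1 p.2 * wprod R L := by
  simp [wprod]

lemma wprod_append (L M : List (Σ i, A i)) :
    wprod R (L ++ M) = wprod R L * wprod R M := by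
  simp [wprod]

@[simp] lemma wprod_singleton (p : Σ i, A i) :
    wprod R [p] = R.incl p.1 p.2 := by
  simp [wprod]

lemma Ek_mul_left (i : I) (d : D) (a : A i) :
    (Ek i).toMap (ι i d * a) = d * (Ek i).toMap a := by
  have := (Ek i).bimod d a 1
  simpa using this

lemma Ek_mul_right (i : I) (a : A i) (d : D) :
    (Ek i).toMap (a * ι i d) = (Ek i).toMap a * d := by
  have := (Ek i).bimod 1 a d
  simpa using this

/-- `a° = a - ι (E a)`. -/
def acirc (Ek : ∀ i, CondExp D (A i) (ι i)) (i : I) (a : A i) : A i :=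
  a - ι i ((Ek i).toMap a)

@[simp] lemma Ek_acirc (i : I) (a : A i) : (Ek i).toMap (acirc Ek i a) = 0 := by
  simp [acirc, map_sub, (Ek i).retract]

lemma incl_eq_acirc_add (i : I) (a : A i) :
    R.incl i a = R.incl i (acirc Ek i a) + R.inclD ((Ek i).toMap a) := by
  rw [← R.compat i, ← map_add]
  congr 1
  simp [acirc]

lemma inclD_mul_word (d : D) (p : Σ i, A i) (L : List (Σ i, A i)) :
    R.inclD d * wprod R (p :: L) = wprod R (⟨p.1, ι p.1 d * p.2⟩ :: L) := by
  simp only [wprod_cons, ← mul_assoc, ← R.compat p.1 d, ← map_mul]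

lemma word_mul_inclD (L : List (Σ i, A i)) (p : Σ i, A i) (d : D) :
    wprod R (L ++ [p]) * R.inclD d = wprod R (L ++ [⟨p.1, p.2 * ι p.1 d⟩]) := by
  simp only [wprod_append, wprod_singleton, mul_assoc, ← R.compat p.1 d, ← map_mul]

lemma red_cons_of (p : Σ i, A i) (a' : A p.1) {L : List (Σ i, A i)}
    (h : Red Ek (p :: L)) (ha : (Ek p.1).toMap a' = 0) :
    Red Ek (⟨p.1, a'⟩ :: L) := by
  obtain ⟨h1, h2⟩ := h
  refine ⟨?_, ?_⟩
  · rintro q hq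
    rcases List.mem_cons.1 hq with rfl | hq
    · exact ha
    · exact h1 q (List.mem_cons_of_mem _ hq)
  · simpa using h2

lemma red_concat_of (p : Σ i, A i) (a' : A p.1) {L : List (Σ i, A i)}
    (h : Red Ek (L ++ [p])) (ha : (Ek p.1).toMap a' = 0) :
    Red Ek (L ++ [⟨p.1, a'⟩]) := by
  obtain ⟨h1, h2⟩ := h
  refine ⟨?_, ?_⟩
  · rintro q hq
    rcases List.mem_append.1 hq with hq | hq
    · exact h1 q (List.mem_append_left _ hq)
    · rcases List.mem_singleton.1 hq with rfl
      exact ha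
  · simpa using h2

lemma Red.tail' {q : Σ i, A i} {L : List (Σ i, A i)} (h : Red Ek (q :: L)) : Red Ek L :=
  ⟨fun p hp => h.1 p (List.mem_cons_of_mem _ hp), by
    have := h.2
    simp only [List.map_cons] at this
    exact this.tail⟩

lemma Red.init' {p : Σ i, A i} {L : List (Σ i, A i)} (h : Red Ek (L ++ [p])) : Red Ek L :=
  ⟨fun q hq => h.1 q (List.mem_append_left _ hq), by
    have := h.2
    simp only [List.map_append] at this
    exact this.left_of_append⟩


lemma good_inclD (d : D) : R.inclD d ∈ GoodSet R := Or.inl ⟨d, rfl⟩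

lemma good_word {L : List (Σ i, A i)} (hne : L ≠ []) (hR : Red Ek L) :
    wprod R L ∈ GoodSet R := Or.inr ⟨L, hne, hR, rfl⟩

lemma inclD_mul_good {d : D} {x : FP} (hx : x ∈ GoodSet R) :
    R.inclD d * x ∈ GoodSet R := by
  rcases hx with ⟨d', rfl⟩ | ⟨L, hne, hR, rfl⟩
  · exact Or.inl ⟨d * d', map_mul _ _ _⟩
  · obtain ⟨q, L', rfl⟩ := List.exists_cons_of_ne_nil hne
    rw [inclD_mul_word]
    exact good_word R (by simp) (red_cons_of q _ hR (by rw [Ek_mul_left, hR.1 q (by simp), mul_zero]))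

lemma good_mul_inclD {d : D} {x : FP} (hx : x ∈ GoodSet R) :
    x * R.inclD d ∈ GoodSet R := by
  rcases hx with ⟨d', rfl⟩ | ⟨L, hne, hR, rfl⟩
  · exact Or.inl ⟨d' * d, map_mul _ _ _⟩
  · rcases List.eq_nil_or_concat' L with rfl | ⟨L', p, rfl⟩
    · exact absurd rfl hne
    · rw [word_mul_inclD]
      exact good_word R (by simp)
        (red_concat_of p _ hR (by rw [Ek_mul_right, hR.1 p (by simp), zero_mul]))

lemma word_mul_word : ∀ (n : ℕ) (L M : List (Σ i, A i)), L.length ≤ n → L ≠ [] → M ≠ [] →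
    Red Ek L → Red Ek M → wprod R L * wprod R M ∈ Submodule.span ℂ (GoodSet R) := by
  intro n
  induction n with
  | zero =>
    intro L M h hL
    rw [Nat.le_zero, List.length_eq_zero_iff] at h
    exact absurd h hL
  | succ n IH =>
    intro L M hlen hL hM hRL hRM
    rcases List.eq_nil_or_concat' L with rfl | ⟨L', p, rfl⟩
    · exact absurd rfl hL
    obtain ⟨q, M', rfl⟩ := List.exists_cons_of_ne_nil hM
    -- last/first index conditions from reducedness
    have hlast : ∀ x ∈ (L'.map Sigma.fst).getLast?, x ≠ p.1 := by
      have h2 := hRL.2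
      simp only [List.map_append, List.map_cons, List.map_nil] at h2
      have := (List.isChain_append.1 h2).2.2
      simpa using this
    have hheadM : ∀ y ∈ (M'.map Sigma.fst).head?, q.1 ≠ y := by
      have h2 := hRM.2
      simp only [List.map_cons] at h2
      exact (List.isChain_cons.1 h2).1
    by_cases hpq : p.1 = q.1
    · -- merge the two middle letters
      obtain ⟨ip, ap⟩ := p
      obtain ⟨iq, aq⟩ := q
      dsimp at hpq
      subst hpq
      set d := (Ek ip).toMap (ap * aq) with hd
      set c0 := acirc Ek ip (ap * aq) with hc0
      have hsplit : R.incl ip (ap * aq) = R.incl ip c0 + R.inclD d :=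
        incl_eq_acirc_add R ip (ap * aq)
      have hprod : wprod R (L' ++ [⟨ip, ap⟩]) * wprod R (⟨ip, aq⟩ :: M')
          = wprod R L' * R.incl ip c0 * wprod R M'
            + wprod R L' * R.inclD d * wprod R M' := by
        rw [wprod_append, wprod_singleton, wprod_cons]
        calc wprod R L' * R.incl ip ap * (R.incl ip aq * wprod R M')
            = wprod R L' * (R.incl ip ap * R.incl ip aq) * wprod R M' := by
              simp [mul_assoc]
          _ = wprod R L' * (R.incl ip c0 + R.inclD d) * wprod R M' := by
              rw [← map_mul, hsplit]
          _ = _ := by noncomm_ring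
      rw [hprod]
      refine add_mem ?_ ?_
      · have ht1 : wprod R L' * R.incl ip c0 * wprod R M'
            = wprod R (L' ++ ⟨ip, c0⟩ :: M') := by
          rw [wprod_append, wprod_cons, mul_assoc]
        rw [ht1]
        refine Submodule.subset_span (good_word R (by simp) ⟨?_, ?_⟩)
        · intro x hx
          rcases List.mem_append.1 hx with hx | hx
          · exact hRL.1 x (List.mem_append_left _ hx)
          · rcases List.mem_cons.1 hx with rfl | hx
            · exact Ek_acirc ip (ap * aq)
            · exact hRM.1 x (List.mem_cons_of_mem _ hx)
        · simp only [List.map_append, List.map_cons]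
          rw [List.isChain_append]
          refine ⟨?_, ?_, ?_⟩
          · have h2 := hRL.2
            simp only [List.map_append, List.map_cons, List.map_nil] at h2
            exact h2.left_of_append
          · rw [List.isChain_cons]
            have h2 := hRM.2
            simp only [List.map_cons] at h2
            exact ⟨(List.isChain_cons.1 h2).1, (List.isChain_cons.1 h2).2⟩
          · intro x hx y hy
            simp only [List.head?_cons, Option.mem_some_iff] at hy
            subst hy
            exact hlast x hx
      · rcases List.eq_nil_or_concat' L' with rfl | ⟨L'', s, rfl⟩
        · simp only [wprod_nil, one_mul]
          rcases M' with _ | ⟨r, M''⟩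
          · simpa using Submodule.subset_span (good_inclD R d)
          · rw [inclD_mul_word]
            refine Submodule.subset_span (good_word R (by simp) ?_)
            refine red_cons_of r _ hRM.tail' ?_
            rw [Ek_mul_left, hRM.1 r (by simp), mul_zero]
        · have hw : wprod R (L'' ++ [s]) * R.inclD d
              = wprod R (L'' ++ [⟨s.1, s.2 * ι s.1 d⟩]) := word_mul_inclD R L'' s d
          have hRs : Red Ek (L'' ++ [⟨s.1, s.2 * ι s.1 d⟩]) := by
            refine red_concat_of s _ hRL.init' ?_
            rw [Ek_mul_right, hRL.1 s (by simp), zero_mul]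
          rcases M' with _ | ⟨r, M''⟩
          · rw [wprod_nil, mul_one, hw]
            exact Submodule.subset_span (good_word R (by simp) hRs)
          · rw [hw]
            refine IH _ _ ?_ (by simp) (by simp) hRs hRM.tail'
            have := hlen
            simp only [List.length_append, List.length_cons, List.length_nil] at this ⊢
            omega
    · -- concatenation is reduced
      rw [← wprod_append]
      refine Submodule.subset_span (good_word R (by simp) ?_)
      refine ⟨?_, ?_⟩
      · intro x hx
        rcases List.mem_append.1 hx with hx | hx
        · exact hRL.1 x hx
        · exact hRM.1 x hx
      · simp only [List.map_append, List.map_cons]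
        rw [List.isChain_append]
        refine ⟨by simpa using hRL.2, by simpa using hRM.2, ?_⟩
        intro x hx y hy
        simp only [List.map_append, List.map_cons, List.map_nil] at hx
        rw [List.getLast?_concat] at hx
        simp only [Option.mem_some_iff] at hx
        subst hx
        simp only [List.head?_cons, Option.mem_some_iff] at hy
        subst hy
        exact hpq
lemma good_mul_good {x y : FP} (hx : x ∈ GoodSet R) (hy : y ∈ GoodSet R) :
    x * y ∈ Submodule.span ℂ (GoodSet R) := by
  rcases hx with ⟨d, rfl⟩ | ⟨L, hne, hR, rfl⟩
  · exact Submodule.subset_span (inclD_mul_good R hy)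
  · rcases hy with ⟨d, rfl⟩ | ⟨M, hneM, hRM, rfl⟩
    · exact Submodule.subset_span (good_mul_inclD R (good_word R hne hR))
    · exact word_mul_word R L.length L M le_rfl hne hneM hR hRM

lemma span_mul_mem {x y : FP} (hx : x ∈ Submodule.span ℂ (GoodSet R))
    (hy : y ∈ Submodule.span ℂ (GoodSet R)) : x * y ∈ Submodule.span ℂ (GoodSet R) := by
  induction hx using Submodule.span_induction with
  | mem a ha =>
    induction hy using Submodule.span_induction with
    | mem b hb => exact good_mul_good R ha hb
    | zero => simpa using Submodule.zero_mem _
    | add b c _ _ hb hc => rw [mul_add]; exact add_mem hb hc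
    | smul c b _ hb => rw [mul_smul_comm]; exact Submodule.smul_mem _ _ hb
  | zero => simpa using Submodule.zero_mem _
  | add a b _ _ ha hb => rw [add_mul]; exact add_mem ha hb
  | smul c a _ ha => rw [smul_mul_assoc]; exact Submodule.smul_mem _ _ ha

lemma star_list_prod (l : List FP) : star l.prod = (l.reverse.map star).prod := by
  induction l with
  | nil => simp
  | cons a l ih =>
    simp [List.prod_cons, star_mul, ih]

lemma star_wprod (L : List (Σ i, A i)) :
    star (wprod R L) = wprod R (L.reverse.map fun p => ⟨p.1, star p.2⟩) := by
  rw [wprod, star_list_prod, wprod]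
  simp [List.map_reverse, List.map_map, Function.comp_def, map_star]

lemma red_star_reverse {L : List (Σ i, A i)} (h : Red Ek L) :
    Red Ek (L.reverse.map fun p => (⟨p.1, star p.2⟩ : Σ i, A i)) := by
  constructor
  · intro p hp
    simp only [List.mem_map, List.mem_reverse] at hp
    obtain ⟨q, hq, rfl⟩ := hp
    rw [(Ek q.1).map_star, h.1 q hq, star_zero]
  · have hmap : ((L.reverse.map fun p => (⟨p.1, star p.2⟩ : Σ i, A i)).map Sigma.fst)
        = (L.map Sigma.fst).reverse := by
      simp [List.map_reverse, List.map_map, Function.comp_def]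
    rw [hmap, List.isChain_reverse]
    exact h.2.imp fun _ _ hab => Ne.symm hab

lemma star_good {x : FP} (hx : x ∈ GoodSet R) : star x ∈ GoodSet R := by
  rcases hx with ⟨d, rfl⟩ | ⟨L, hne, hR, rfl⟩
  · exact Or.inl ⟨star d, map_star R.inclD d⟩
  · rw [star_wprod]
    exact good_word R (by simpa using hne) (red_star_reverse hR)

lemma star_mem_span {x : FP} (hx : x ∈ Submodule.span ℂ (GoodSet R)) :
    star x ∈ Submodule.span ℂ (GoodSet R) := by
  induction hx using Submodule.span_induction with
  | mem a ha => exact Submodule.subset_span (star_good R ha)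
  | zero => simpa using Submodule.zero_mem _
  | add a b _ _ ha hb => rw [star_add]; exact add_mem ha hb
  | smul c a _ ha => rw [star_smul]; exact Submodule.smul_mem _ _ ha

lemma adjoin_le_span (x : FP)
    (hx : x ∈ StarAlgebra.adjoin ℂ (⋃ i, Set.range (R.incl i))) :
    x ∈ Submodule.span ℂ (GoodSet R) := by
  induction hx using StarAlgebra.adjoin_induction with
  | mem a ha =>
    simp only [Set.mem_iUnion, Set.mem_range] at ha
    obtain ⟨i, b, rfl⟩ := ha
    rw [incl_eq_acirc_add R i b]
    refine add_mem (Submodule.subset_span ?_) (Submodule.subset_span (good_inclD R _))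
    rw [show R.incl i (acirc Ek i b) = wprod R [⟨i, acirc Ek i b⟩] by simp]
    refine good_word R (by simp) ⟨?_, by simp⟩
    intro p hp
    rcases List.mem_singleton.1 hp with rfl
    exact Ek_acirc i b
  | algebraMap c =>
    rw [Algebra.algebraMap_eq_smul_one]
    refine Submodule.smul_mem _ _ (Submodule.subset_span ?_)
    rw [show (1 : FP) = R.inclD 1 from (map_one R.inclD).symm]
    exact good_inclD R 1
  | add a b _ _ ha hb => exact add_mem ha hb
  | mul a b _ _ ha hb => exact span_mul_mem R ha hb
  | star a _ ha => exact star_mem_span R ha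

lemma exists_fin_form (q : Σ i, A i) (L : List (Σ i, A i))
    (hR : Red Ek (q :: L)) :
    ∃ (idx : Fin (L.length + 1) → I) (a : ∀ t, A (idx t)),
      (∀ t, (Ek (idx t)).toMap (a t) = 0) ∧
      (∀ t : Fin L.length, idx t.castSucc ≠ idx t.succ) ∧
      ((List.ofFn fun t => R.incl (idx t) (a t)).prod = wprod R (q :: L)) ∧
      idx 0 = q.1 := by
  refine ⟨fun t => ((q :: L).get t).1, fun t => ((q :: L).get t).2, ?_, ?_, ?_, rfl⟩
  · intro t
    exact hR.1 _ (by simpa using List.get_mem (q :: L) t.1 t.2)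
  · intro t
    have h2 := hR.2
    rw [List.isChain_iff_getElem] at h2
    have := h2 t.1 (by simpa using t.2)
    simp only [List.get_eq_getElem, List.getElem_map] at this
    simpa only [List.get_eq_getElem, Fin.coe_castSucc, Fin.val_succ] using this
  · congr 1
    exact List.ofFn_getElem_eq_map (q :: L) (fun p => R.incl p.1 p.2)
lemma incl_mul_inclD (k : I) (a : A k) (d : D) :
    R.incl k a * R.inclD d =
      wprod R [⟨k, acirc Ek k a * ι k d⟩] + R.inclD ((Ek k).toMap a * d) := by
  have h0 : R.incl k a * R.inclD d = R.incl k (a * ι k d) := by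
    rw [← R.compat k d, ← map_mul]
  rw [h0, wprod_singleton]
  show R.incl k (a * ι k d) = R.incl k (acirc Ek k a * ι k d) + R.inclD ((Ek k).toMap a * d)
  rw [← R.compat k, ← map_add]
  congr 1
  simp [acirc, sub_mul, map_mul]

lemma incl_mul_word (k : I) (a : A k) (q : Σ i, A i) (L : List (Σ i, A i)) :
    R.incl k a * wprod R (q :: L) =
      wprod R (⟨k, acirc Ek k a⟩ :: q :: L)
        + wprod R (⟨q.1, ι q.1 ((Ek k).toMap a) * q.2⟩ :: L) := by
  have h1 : wprod R (⟨k, acirc Ek k a⟩ :: q :: L)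
      = R.incl k (acirc Ek k a) * wprod R (q :: L) := wprod_cons R _ _
  have h2 : wprod R (⟨q.1, ι q.1 ((Ek k).toMap a) * q.2⟩ :: L)
      = R.inclD ((Ek k).toMap a) * wprod R (q :: L) := (inclD_mul_word R _ q L).symm
  rw [h1, h2, ← add_mul, ← incl_eq_acirc_add]

lemma red_singleton {k : I} {a : A k} (ha : (Ek k).toMap a = 0) :
    Red Ek [⟨k, a⟩] := by
  refine ⟨?_, by simp⟩
  intro p hp
  rcases List.mem_singleton.1 hp with rfl
  exact ha

lemma red_cons_acirc {k : I} (a : A k) {q : Σ i, A i} {L : List (Σ i, A i)}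
    (hR : Red Ek (q :: L)) (hqk : q.1 ≠ k) :
    Red Ek (⟨k, acirc Ek k a⟩ :: q :: L) := by
  constructor
  · intro p hp
    rcases List.mem_cons.1 hp with rfl | hp
    · exact Ek_acirc k a
    · exact hR.1 p hp
  · simp only [List.map_cons]
    rw [List.isChain_cons_cons]
    exact ⟨Ne.symm hqk, by simpa using hR.2⟩

lemma red_head_mod {q : Σ i, A i} {L : List (Σ i, A i)} (hR : Red Ek (q :: L)) (d : D) :
    Red Ek (⟨q.1, ι q.1 d * q.2⟩ :: L) :=
  red_cons_of q _ hR (by rw [Ek_mul_left, hR.1 q (by simp), mul_zero])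

end Words

section GNS

variable {R : ReducedAFP ι Ek FP} {Fexp : ∀ k, FactorExp R k} {Y : I → Type v} [∀ k, NormedAddCommGroup (Y k)]
  [∀ k, NormedSpace ℂ (Y k)] [∀ k, CompleteSpace (Y k)]
variable (Gns : ∀ k, GNSRep (R.incl k) (Fexp k).toCondExp (Y k))

/-- The GNS vector of `x : FP` in the component `Y j`. -/
def vec (j : I) (x : FP) : Y j := (Gns j).rep.act x (Gns j).cyc

lemma vec_add (j : I) (x y : FP) : vec Gns j (x + y) = vec Gns j x + vec Gns j y := by
  simp [vec, map_add, ContinuousLinearMap.add_apply]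

lemma vec_sub (j : I) (x y : FP) : vec Gns j (x - y) = vec Gns j x - vec Gns j y := by
  simp [vec, map_sub, ContinuousLinearMap.sub_apply]

lemma vec_smul (j : I) (c : ℂ) (x : FP) : vec Gns j (c • x) = c • vec Gns j x := by
  simp [vec, map_smul, ContinuousLinearMap.smul_apply]

lemma vec_zero (j : I) : vec Gns j (0 : FP) = 0 := by
  simp [vec, map_zero, ContinuousLinearMap.zero_apply]

lemma vec_one (j : I) : vec Gns j (1 : FP) = (Gns j).cyc := by
  rw [vec, (Gns j).rep_unital]
  rfl

lemma norm_vec_le (j : I) (x : FP) : ‖vec Gns j x‖ ≤ ‖x‖ := by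
  have h1 : ‖vec Gns j x‖ ^ 2 = ‖(Gns j).mod.inner (vec Gns j x) (vec Gns j x)‖ :=
    (Gns j).mod.norm_inner _
  have h4 : (Gns j).mod.inner (vec Gns j x) (vec Gns j x)
      = (Fexp j).toCondExp.toMap (star x * x) := (Gns j).inner_cyc x x
  rw [h4] at h1
  have h2 : ‖(Fexp j).toCondExp.toMap (star x * x)‖ ≤ ‖star x * x‖ :=
    (Fexp j).toCondExp.contractive _
  have h3 : ‖star x * x‖ = ‖x‖ * ‖x‖ := CStarRing.norm_star_mul_self
  nlinarith [norm_nonneg (vec Gns j x), norm_nonneg x]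

lemma continuous_vec (j : I) : Continuous (vec Gns j) := by
  have : LipschitzWith 1 (vec Gns j) := by
    apply LipschitzWith.of_dist_le_mul
    intro x y
    rw [dist_eq_norm, dist_eq_norm, ← vec_sub]
    simpa using norm_vec_le Gns j (x - y)
  exact this.continuous

lemma vec_mem_span (j : I) {x : FP} (hx : x ∈ Submodule.span ℂ (GoodSet R)) :
    vec Gns j x ∈ Submodule.span ℂ (vec Gns j '' GoodSet R) := by
  induction hx using Submodule.span_induction with
  | mem a ha => exact Submodule.subset_span ⟨a, ha, rfl⟩
  | zero => rw [vec_zero]; exact zero_mem _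
  | add a b _ _ ha hb => rw [vec_add]; exact add_mem ha hb
  | smul c a _ ha => rw [vec_smul]; exact Submodule.smul_mem _ _ ha

lemma dense_span_vec (j : I) :
    Dense ((Submodule.span ℂ (vec Gns j '' GoodSet R) : Submodule ℂ (Y j)) : Set (Y j)) := by
  intro yy
  have h0 : yy ∈ closure (Set.range fun b : FP => (Gns j).rep.act b (Gns j).cyc) :=
    (Gns j).cyclic yy
  have hsub : (Set.range fun b : FP => (Gns j).rep.act b (Gns j).cyc)
      ⊆ closure ((Submodule.span ℂ (vec Gns j '' GoodSet R) : Submodule ℂ (Y j)) : Set (Y j)) := by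
    rintro _ ⟨b, rfl⟩
    have hb : b ∈ closure ((StarAlgebra.adjoin ℂ (⋃ i, Set.range (R.incl i)) :
        StarSubalgebra ℂ FP) : Set FP) := R.generates b
    have himg : vec Gns j b ∈ closure (vec Gns j ''
        ((StarAlgebra.adjoin ℂ (⋃ i, Set.range (R.incl i)) : StarSubalgebra ℂ FP) : Set FP)) :=
      image_closure_subset_closure_image (continuous_vec Gns j) ⟨b, hb, rfl⟩
    refine closure_mono ?_ himg
    rintro _ ⟨x, hx, rfl⟩
    exact vec_mem_span Gns j (adjoin_le_span R x hx)
  exact closure_minimal hsub isClosed_closure h0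

lemma clm_ext_good (j : I) {T S : Y j →L[ℂ] Y j}
    (h : ∀ g ∈ GoodSet R, T (vec Gns j g) = S (vec Gns j g)) : T = S := by
  have heq : Set.EqOn ⇑T ⇑S
      ((Submodule.span ℂ (vec Gns j '' GoodSet R) : Submodule ℂ (Y j)) : Set (Y j)) := by
    intro x hx
    induction hx using Submodule.span_induction with
    | mem a ha =>
      obtain ⟨g, hg, rfl⟩ := ha
      exact h g hg
    | zero => simp
    | add a b _ _ ha hb => simp only [map_add, ha, hb]
    | smul c a _ ha => simp only [map_smul, ha]
  have := Continuous.ext_on (dense_span_vec Gns j) T.continuous S.continuous heq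
  exact ContinuousLinearMap.ext fun x => congrFun this x

lemma jones_vec (j : I) (x : FP) :
    (Gns j).jones (vec Gns j x) =
      (Gns j).mod.rsmul (Gns j).cyc ((Fexp j).toCondExp.toMap x) := by
  rw [(Gns j).jones_apply]
  congr 1
  calc (Gns j).mod.inner (Gns j).cyc (vec Gns j x)
      = (Gns j).mod.inner ((Gns j).rep.act 1 (Gns j).cyc) ((Gns j).rep.act x (Gns j).cyc) := by
        rw [(Gns j).rep_unital]; rfl
    _ = (Fexp j).toCondExp.toMap (star 1 * x) := (Gns j).inner_cyc 1 x
    _ = _ := by rw [star_one, one_mul]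

lemma toMap_word_ne (k : I) (q : Σ i, A i) (L : List (Σ i, A i)) (hR : Red Ek (q :: L))
    (h : 1 ≤ L.length ∨ q.1 ≠ k) :
    (Fexp k).toCondExp.toMap (wprod R (q :: L)) = 0 := by
  obtain ⟨idx, a, hE, hch, hprod, hidx0⟩ := exists_fin_form R q L hR
  rw [← hprod]
  exact (Fexp k).kills L.length idx a hE hch (h.imp id fun hh => hidx0 ▸ hh)

variable {Δ : Type u} [CStarAlgebra Δ]

lemma act_emb_vec (CD : ConcreteDeltaT R Fexp Y Gns Δ) (j : I) (x y : FP) :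
    (CD.σrep j).act (CD.emb x) (vec Gns j y) = vec Gns j (x * y) := by
  rw [CD.σ_emb, vec, vec, (Gns j).rep.act_mul]
  rfl

lemma act_one_sub_P (CD : ConcreteDeltaT R Fexp Y Gns Δ) (j k : I) (v : Y j) :
    (CD.σrep j).act (1 - CD.P k) v = v - (CD.σrep j).act (CD.P k) v := by
  rw [map_sub, ContinuousLinearMap.sub_apply, CD.σrep_unital j]
  rfl

lemma vec_inclD_eq (j : I) (d : D) :
    vec Gns j (R.inclD d) = (Gns j).mod.rsmul (Gns j).cyc (ι j d) := by
  rw [← R.compat j d, vec, ← (Gns j).cyc_rsmul]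

lemma P_vec_inclD_self (CD : ConcreteDeltaT R Fexp Y Gns Δ) (k : I) (d : D) :
    (CD.σrep k).act (CD.P k) (vec Gns k (R.inclD d)) = vec Gns k (R.inclD d) := by
  rw [vec_inclD_eq, (CD.σrep k).act_rsmul, CD.P_cyc_self]

lemma P_vec_inclD_ne (CD : ConcreteDeltaT R Fexp Y Gns Δ) {j k : I} (hj : j ≠ k) (d : D) :
    (CD.σrep j).act (CD.P k) (vec Gns j (R.inclD d)) = 0 := by
  rw [vec_inclD_eq, (CD.σrep j).act_rsmul, CD.P_cyc_ne j k hj]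
  rw [show (Gns j).mod.rsmul 0 = 0 from map_zero _, LinearMap.zero_apply]

lemma P_vec_word_fix (CD : ConcreteDeltaT R Fexp Y Gns Δ) (j k : I) (q : Σ i, A i)
    (L : List (Σ i, A i)) (hR : Red Ek (q :: L)) (hqk : q.1 = k) :
    (CD.σrep j).act (CD.P k) (vec Gns j (wprod R (q :: L))) = vec Gns j (wprod R (q :: L)) := by
  obtain ⟨idx, a, hE, hch, hprod, hidx0⟩ := exists_fin_form R q L hR
  rw [← hprod]
  exact CD.P_word_fix j k L.length idx a hE hch (hidx0.trans hqk)

lemma P_vec_word_kill (CD : ConcreteDeltaT R Fexp Y Gns Δ) (j k : I) (q : Σ i, A i)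
    (L : List (Σ i, A i)) (hR : Red Ek (q :: L)) (hqk : q.1 ≠ k) :
    (CD.σrep j).act (CD.P k) (vec Gns j (wprod R (q :: L))) = 0 := by
  obtain ⟨idx, a, hE, hch, hprod, hidx0⟩ := exists_fin_form R q L hR
  rw [← hprod]
  exact CD.P_word_kill j k L.length idx a hE hch (by rw [hidx0]; exact hqk)

end GNS
section Inner

variable {D' : Type u} [CStarAlgebra D'] {X : Type v} [NormedAddCommGroup X]
  [NormedSpace ℂ X] [CompleteSpace X] (M : HilbMod D' X)

lemma inner_zero_right (x : X) : M.inner x 0 = 0 := by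
  have h := M.inner_smul_right 0 x 0
  simpa using h

lemma inner_add_left (x y z : X) : M.inner (x + y) z = M.inner x z + M.inner y z := by
  have h := congrArg star (M.inner_add_right z x y)
  rw [star_add, M.star_inner, M.star_inner, M.star_inner] at h
  exact h

lemma inner_rsmul_left (x y : X) (d : D') :
    M.inner (M.rsmul x d) y = star d * M.inner x y := by
  have h := congrArg star (M.inner_rsmul_right y x d)
  rw [star_mul, M.star_inner, M.star_inner] at h
  exact h

lemma inner_sum_right {n : Type*} (s : Finset n) (f : n → X) (x : X) :
    M.inner x (∑ i ∈ s, f i) = ∑ i ∈ s, M.inner x (f i) :=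
  map_sum (AddMonoidHom.mk' (M.inner x) (M.inner_add_right x)) f s

lemma inner_sum_left {n : Type*} (s : Finset n) (f : n → X) (x : X) :
    M.inner (∑ i ∈ s, f i) x = ∑ i ∈ s, M.inner (f i) x := by
  have h := congrArg star (inner_sum_right M s f x)
  rw [star_sum, M.star_inner] at h
  rw [h]
  exact Finset.sum_congr rfl fun i _ => M.star_inner _ _

end Inner

section CondExpDelta

variable {R : ReducedAFP ι Ek FP} {Fexp : ∀ k, FactorExp R k} {Y : I → Type v}
  [∀ k, NormedAddCommGroup (Y k)] [∀ k, NormedSpace ℂ (Y k)] [∀ k, CompleteSpace (Y k)]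
  (Gns : ∀ k, GNSRep (R.incl k) (Fexp k).toCondExp (Y k))
  {Δ : Type u} [CStarAlgebra Δ] (CD : ConcreteDeltaT R Fexp Y Gns Δ)

/-- The compression of `ΔT(A,E)` by the Jones projection, as a linear map to `A k`. -/
def EΔlin (k : I) : Δ →ₗ[ℂ] A k where
  toFun δ := (Gns k).mod.inner (Gns k).cyc ((CD.σrep k).act δ (Gns k).cyc)
  map_add' δ₁ δ₂ := by
    rw [map_add, ContinuousLinearMap.add_apply, (Gns k).mod.inner_add_right]
  map_smul' c δ := by
    rw [map_smul, ContinuousLinearMap.smul_apply, (Gns k).mod.inner_smul_right]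
    rfl

lemma EΔlin_apply (k : I) (δ : Δ) :
    EΔlin Gns CD k δ = (Gns k).mod.inner (Gns k).cyc ((CD.σrep k).act δ (Gns k).cyc) := rfl

lemma EΔlin_emb (k : I) (y : FP) :
    EΔlin Gns CD k (CD.emb y) = (Fexp k).toCondExp.toMap y := by
  rw [EΔlin_apply, CD.σ_emb]
  calc (Gns k).mod.inner (Gns k).cyc ((Gns k).rep.act y (Gns k).cyc)
      = (Gns k).mod.inner ((Gns k).rep.act 1 (Gns k).cyc) ((Gns k).rep.act y (Gns k).cyc) := by
        rw [(Gns k).rep_unital]; rfl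
    _ = (Fexp k).toCondExp.toMap (star 1 * y) := (Gns k).inner_cyc 1 y
    _ = _ := by rw [star_one, one_mul]

lemma EΔlin_one (k : I) : EΔlin Gns CD k 1 = 1 := by
  have h := EΔlin_emb Gns CD k 1
  rw [map_one] at h
  rw [h]
  have h2 := (Fexp k).toCondExp.retract 1
  rwa [map_one] at h2

lemma EΔlin_star (k : I) (δ : Δ) :
    EΔlin Gns CD k (star δ) = star (EΔlin Gns CD k δ) := by
  rw [EΔlin_apply, EΔlin_apply]
  have h := (CD.σrep k).act_star δ (Gns k).cyc (Gns k).cyc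
  rw [(Gns k).mod.star_inner]
  exact h.symm

lemma EΔlin_retract (k : I) (a : A k) : EΔlin Gns CD k (CD.emb (R.incl k a)) = a := by
  rw [EΔlin_emb]
  exact (Fexp k).toCondExp.retract a

lemma inner_cyc_act (k : I) (b : A k) (u : Y k) :
    (Gns k).mod.inner (Gns k).cyc ((Gns k).rep.act (R.incl k b) u)
      = b * (Gns k).mod.inner (Gns k).cyc u := by
  rw [← (Gns k).mod.star_inner ((Gns k).rep.act (R.incl k b) u) (Gns k).cyc]
  rw [(Gns k).rep.act_star (R.incl k b) u (Gns k).cyc]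
  rw [show star (R.incl k b) = R.incl k (star b) from (map_star _ _).symm]
  rw [← (Gns k).cyc_rsmul (star b), (Gns k).mod.inner_rsmul_right, star_mul, star_star,
    (Gns k).mod.star_inner]

lemma EΔlin_bimod (k : I) (b : A k) (δ : Δ) (b' : A k) :
    EΔlin Gns CD k (CD.emb (R.incl k b) * δ * CD.emb (R.incl k b'))
      = b * EΔlin Gns CD k δ * b' := by
  rw [EΔlin_apply, EΔlin_apply, (CD.σrep k).act_mul, (CD.σrep k).act_mul]
  simp only [ContinuousLinearMap.comp_apply]
  rw [CD.σ_emb, CD.σ_emb, ← (Gns k).cyc_rsmul b', (CD.σrep k).act_rsmul,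
    (Gns k).rep.act_rsmul, (Gns k).mod.inner_rsmul_right, inner_cyc_act, mul_assoc]

lemma EΔlin_star_mul_self (k : I) (δ : Δ) :
    EΔlin Gns CD k (star δ * δ)
      = (Gns k).mod.inner ((CD.σrep k).act δ (Gns k).cyc) ((CD.σrep k).act δ (Gns k).cyc) := by
  rw [EΔlin_apply, (CD.σrep k).act_mul]
  simp only [ContinuousLinearMap.comp_apply]
  exact ((CD.σrep k).act_star δ (Gns k).cyc _).symm

lemma EΔlin_cp (k : I) : IsCPMap (EΔlin Gns CD k) := by
  intro n a b
  set u : Fin n → Y k := fun i => (CD.σrep k).act (a i) (Gns k).cyc with hu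
  set z : Y k := ∑ i, (Gns k).mod.rsmul (u i) (b i) with hz
  have key : ∑ i, ∑ j, star (b i) * EΔlin Gns CD k (star (a i) * a j) * b j
      = (Gns k).mod.inner z z := by
    rw [hz, inner_sum_left]
    refine Finset.sum_congr rfl fun i _ => ?_
    rw [inner_sum_right]
    refine Finset.sum_congr rfl fun j _ => ?_
    rw [inner_rsmul_left, (Gns k).mod.inner_rsmul_right]
    have hφ : EΔlin Gns CD k (star (a i) * a j) = (Gns k).mod.inner (u i) (u j) := by
      rw [EΔlin_apply, (CD.σrep k).act_mul]
      simp only [ContinuousLinearMap.comp_apply]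
      exact ((CD.σrep k).act_star (a i) (Gns k).cyc _).symm
    rw [hφ, mul_assoc]
  rw [key]
  exact (Gns k).mod.inner_pos z

lemma EΔlin_nonneg (k : I) (y : Δ) : ∃ w : A k, EΔlin Gns CD k (star y * y) = star w * w := by
  rw [EΔlin_star_mul_self]
  exact (Gns k).mod.inner_pos _

lemma norm_one_le_one (B : Type*) [CStarAlgebra B] : ‖(1 : B)‖ ≤ 1 := by
  have h : ‖star (1 : B) * 1‖ = ‖(1 : B)‖ * ‖(1 : B)‖ := CStarRing.norm_star_mul_self
  rw [star_one, one_mul] at h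
  nlinarith [mul_self_nonneg (‖(1 : B)‖ - 1), norm_nonneg (1 : B)]

lemma EΔlin_contractive (k : I) (δ : Δ) : ‖EΔlin Gns CD k δ‖ ≤ ‖δ‖ := by
  letI := CStarAlgebra.spectralOrder Δ
  haveI := CStarAlgebra.spectralOrderedRing Δ
  letI := CStarAlgebra.spectralOrder (A k)
  haveI := CStarAlgebra.spectralOrderedRing (A k)
  set φ := EΔlin Gns CD k with hφdef
  set p := φ δ with hp
  -- Kadison–Schwarz from 2-positivity
  have h2 := EΔlin_cp Gns CD k 2 ![1, δ] ![-p, 1]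
  have hφ1 : φ (1 : Δ) = 1 := EΔlin_one Gns CD k
  have hφstar : φ (star δ) = star p := EΔlin_star Gns CD k δ
  have hexpr : ∑ i, ∑ j, star ((![-p, 1] : Fin 2 → A k) i)
        * φ (star ((![(1 : Δ), δ] : Fin 2 → Δ) i) * (![(1 : Δ), δ] : Fin 2 → Δ) j)
        * (![-p, 1] : Fin 2 → A k) j
      = φ (star δ * δ) - star p * p := by
    simp only [Fin.sum_univ_two, Matrix.cons_val_zero, Matrix.cons_val_one, Matrix.head_cons,
      star_one, one_mul, mul_one, hφ1, hφstar]
    noncomm_ring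
  rw [hexpr] at h2
  obtain ⟨w, hw⟩ := h2
  have hKS : star p * p ≤ φ (star δ * δ) := by
    rw [← sub_nonneg, hw]
    exact star_mul_self_nonneg w
  -- φ is monotone and unital, hence bounded by the norm
  have hle : star δ * δ ≤ algebraMap ℝ Δ ‖star δ * δ‖ :=
    IsSelfAdjoint.le_algebraMap_norm_self (IsSelfAdjoint.star_mul_self δ)
  have hysub : ∃ y : Δ, algebraMap ℝ Δ ‖star δ * δ‖ - star δ * δ = star y * y := by
    have hc : (0 : Δ) ≤ algebraMap ℝ Δ ‖star δ * δ‖ - star δ * δ := sub_nonneg.2 hle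
    refine ⟨CFC.sqrt (algebraMap ℝ Δ ‖star δ * δ‖ - star δ * δ), ?_⟩
    rw [(IsSelfAdjoint.of_nonneg (CFC.sqrt_nonneg (algebraMap ℝ Δ ‖star δ * δ‖ - star δ * δ))).star_eq, CFC.sqrt_mul_sqrt_self _ hc]
  obtain ⟨y, hy⟩ := hysub
  have halg : φ (algebraMap ℝ Δ ‖star δ * δ‖) = algebraMap ℝ (A k) ‖star δ * δ‖ := by
    rw [IsScalarTower.algebraMap_apply ℝ ℂ Δ, IsScalarTower.algebraMap_apply ℝ ℂ (A k),
      Algebra.algebraMap_eq_smul_one, Algebra.algebraMap_eq_smul_one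
        (R := ℂ) (A := A k), map_smul, hφ1]
  have hmono : φ (star δ * δ) ≤ algebraMap ℝ (A k) ‖star δ * δ‖ := by
    rw [← sub_nonneg, ← halg, ← map_sub, hy]
    obtain ⟨w', hw'⟩ := EΔlin_nonneg Gns CD k y
    rw [hw']
    exact star_mul_self_nonneg w'
  have h0p : (0 : A k) ≤ star p * p := star_mul_self_nonneg p
  have hnorm : ‖star p * p‖ ≤ ‖algebraMap ℝ (A k) ‖star δ * δ‖‖ :=
    CStarAlgebra.norm_le_norm_of_nonneg_of_le h0p (hKS.trans hmono)
  have halgnorm : ‖algebraMap ℝ (A k) ‖star δ * δ‖‖ ≤ ‖star δ * δ‖ := by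
    rw [Algebra.algebraMap_eq_smul_one, norm_smul]
    calc ‖(‖star δ * δ‖)‖ * ‖(1 : A k)‖ ≤ ‖star δ * δ‖ * 1 := by
          rw [Real.norm_eq_abs, abs_of_nonneg (norm_nonneg _)]
          exact mul_le_mul_of_nonneg_left (norm_one_le_one (A k)) (norm_nonneg _)
      _ = ‖star δ * δ‖ := mul_one _
  have hps : ‖star p * p‖ = ‖p‖ * ‖p‖ := CStarRing.norm_star_mul_self
  have hds : ‖star δ * δ‖ = ‖δ‖ * ‖δ‖ := CStarRing.norm_star_mul_self
  nlinarith [norm_nonneg p, norm_nonneg δ]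

end CondExpDelta

end Stmt2Aux


theorem stmt_2 {I : Type w} {D : Type u} [CStarAlgebra D] {A : I → Type u}
    [∀ i, CStarAlgebra (A i)] (ι : ∀ i, D →⋆ₐ[ℂ] A i)
    (hι : ∀ i, Function.Injective (ι i)) (Ek : ∀ i, CondExp D (A i) (ι i))
    (hEk : ∀ i, (Ek i).Nondeg) (FP : Type u) [CStarAlgebra FP]
    (R : ReducedAFP ι Ek FP) (Fexp : ∀ k, FactorExp R k) (Y : I → Type v)
    [∀ k, NormedAddCommGroup (Y k)] [∀ k, NormedSpace ℂ (Y k)]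
    [∀ k, CompleteSpace (Y k)] (Gns : ∀ k, GNSRep (R.incl k) (Fexp k).toCondExp (Y k))
    (Δ : Type u) [CStarAlgebra Δ] (CD : ConcreteDeltaT R Fexp Y Gns Δ) :
    -- (i) the projections `P_k` commute with `D`
    (∀ k (d : D), CD.P k * CD.emb (R.inclD d) = CD.emb (R.inclD d) * CD.P k) ∧
    -- (ii) `P_k^⊥ a P_k^⊥ = E(a) P_k^⊥` …
    (∀ k (a : A k),
      (1 - CD.P k) * CD.emb (R.incl k a) * (1 - CD.P k) =
        CD.emb (R.inclD ((Ek k).toMap a)) * (1 - CD.P k)) ∧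
    -- … and `a° P_k^⊥ = P_k° a P_k^⊥` with `P_k° = P_k - e_{A_k}` (an identity in
    -- `L(Y)`, stated componentwise; the Jones projection `e_{A_k}` is supported on
    -- the component `Y_k`)
    (∀ k (a : A k),
      (CD.σrep k).act (CD.emb (R.incl k a - R.inclD ((Ek k).toMap a)) * (1 - CD.P k)) =
        (((CD.σrep k).act (CD.P k) - (Gns k).jones).comp
          (((CD.σrep k).act (CD.emb (R.incl k a))).comp
            ((CD.σrep k).act (1 - CD.P k))))) ∧
    (∀ j k, j ≠ k → ∀ a : A k,
      (CD.σrep j).act (CD.emb (R.incl k a - R.inclD ((Ek k).toMap a)) * (1 - CD.P k)) =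
        (CD.σrep j).act (CD.P k * CD.emb (R.incl k a) * (1 - CD.P k))) ∧
    -- (iii) compression by `e_{A_k}` defines a conditional expectation
    -- `ΔT(A,E) → A_k` extending `E_{A_k}`
    (∀ k, ∃ EΔ : CondExp (A k) Δ ((CD.emb).comp (R.incl k)),
      (∀ y : FP, EΔ.toMap (CD.emb y) = (Fexp k).toCondExp.toMap y) ∧
      ∀ δ : Δ, (Gns k).jones.comp (((CD.σrep k).act δ).comp (Gns k).jones) =
        ((Gns k).rep.act (R.incl k (EΔ.toMap δ))).comp (Gns k).jones) := by
  classical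
  refine ⟨?_, ?_, ?_, ?_, ?_⟩
  · -- (i) the projections commute with D
    intro k d
    rw [← sub_eq_zero]
    apply CD.faithful_family
    intro j
    rw [map_sub, (CD.σrep j).act_mul, (CD.σrep j).act_mul, sub_eq_zero]
    refine Stmt2Aux.clm_ext_good Gns j ?_
    intro g hg
    simp only [ContinuousLinearMap.comp_apply]
    rcases hg with ⟨d', rfl⟩ | ⟨L, hne, hR, rfl⟩
    · have h2 : (CD.σrep j).act (CD.emb (R.inclD d)) (Stmt2Aux.vec Gns j (R.inclD d'))
          = Stmt2Aux.vec Gns j (R.inclD (d * d')) := by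
        rw [Stmt2Aux.act_emb_vec Gns CD, ← map_mul]
      by_cases hj : j = k
      · subst hj
        rw [h2, Stmt2Aux.P_vec_inclD_self Gns CD, Stmt2Aux.P_vec_inclD_self Gns CD, h2]
      · rw [h2, Stmt2Aux.P_vec_inclD_ne Gns CD hj, Stmt2Aux.P_vec_inclD_ne Gns CD hj, map_zero]
    · obtain ⟨q, L', rfl⟩ := List.exists_cons_of_ne_nil hne
      have h2 : (CD.σrep j).act (CD.emb (R.inclD d)) (Stmt2Aux.vec Gns j (Stmt2Aux.wprod R (q :: L')))
          = Stmt2Aux.vec Gns j (Stmt2Aux.wprod R (⟨q.1, ι q.1 d * q.2⟩ :: L')) := by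
        rw [Stmt2Aux.act_emb_vec Gns CD, Stmt2Aux.inclD_mul_word]
      by_cases hq : q.1 = k
      · rw [h2, Stmt2Aux.P_vec_word_fix Gns CD j k _ L' (Stmt2Aux.red_head_mod hR d) hq,
          Stmt2Aux.P_vec_word_fix Gns CD j k q L' hR hq, h2]
      · rw [h2, Stmt2Aux.P_vec_word_kill Gns CD j k _ L' (Stmt2Aux.red_head_mod hR d) hq,
          Stmt2Aux.P_vec_word_kill Gns CD j k q L' hR hq, map_zero]
  · -- (ii) the Jones relation
    intro k a
    rw [← sub_eq_zero]
    apply CD.faithful_family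
    intro j
    rw [map_sub, (CD.σrep j).act_mul, (CD.σrep j).act_mul, (CD.σrep j).act_mul, sub_eq_zero]
    refine Stmt2Aux.clm_ext_good Gns j ?_
    intro g hg
    simp only [ContinuousLinearMap.comp_apply]
    rcases hg with ⟨d, rfl⟩ | ⟨L, hne, hR, rfl⟩
    · by_cases hj : j = k
      · subst hj
        have h1 : (CD.σrep j).act (1 - CD.P j) (Stmt2Aux.vec Gns j (R.inclD d)) = 0 := by
          rw [Stmt2Aux.act_one_sub_P Gns CD, Stmt2Aux.P_vec_inclD_self Gns CD, sub_self]
        rw [h1, map_zero, map_zero, map_zero]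
      · have h1 : (CD.σrep j).act (1 - CD.P k) (Stmt2Aux.vec Gns j (R.inclD d))
            = Stmt2Aux.vec Gns j (R.inclD d) := by
          rw [Stmt2Aux.act_one_sub_P Gns CD, Stmt2Aux.P_vec_inclD_ne Gns CD hj, sub_zero]
        have h2 : (CD.σrep j).act (CD.emb (R.incl k a)) (Stmt2Aux.vec Gns j (R.inclD d))
            = Stmt2Aux.vec Gns j (Stmt2Aux.wprod R [⟨k, Stmt2Aux.acirc Ek k a * ι k d⟩])
              + Stmt2Aux.vec Gns j (R.inclD ((Ek k).toMap a * d)) := by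
          rw [Stmt2Aux.act_emb_vec Gns CD, Stmt2Aux.incl_mul_inclD R k a d, Stmt2Aux.vec_add Gns]
        have h3 : (CD.σrep j).act (1 - CD.P k)
            (Stmt2Aux.vec Gns j (Stmt2Aux.wprod R [⟨k, Stmt2Aux.acirc Ek k a * ι k d⟩])) = 0 := by
          rw [Stmt2Aux.act_one_sub_P Gns CD,
            Stmt2Aux.P_vec_word_fix Gns CD j k ⟨k, Stmt2Aux.acirc Ek k a * ι k d⟩ []
              (Stmt2Aux.red_singleton
                (by rw [Stmt2Aux.Ek_mul_right, Stmt2Aux.Ek_acirc, zero_mul])) rfl,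
            sub_self]
        have h4 : (CD.σrep j).act (1 - CD.P k)
            (Stmt2Aux.vec Gns j (R.inclD ((Ek k).toMap a * d)))
            = Stmt2Aux.vec Gns j (R.inclD ((Ek k).toMap a * d)) := by
          rw [Stmt2Aux.act_one_sub_P Gns CD, Stmt2Aux.P_vec_inclD_ne Gns CD hj, sub_zero]
        have h5 : (CD.σrep j).act (CD.emb (R.inclD ((Ek k).toMap a)))
            (Stmt2Aux.vec Gns j (R.inclD d))
            = Stmt2Aux.vec Gns j (R.inclD ((Ek k).toMap a * d)) := by
          rw [Stmt2Aux.act_emb_vec Gns CD, ← map_mul]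
        rw [h1, h2, map_add, h3, h4, h5, zero_add]
    · obtain ⟨q, L', rfl⟩ := List.exists_cons_of_ne_nil hne
      by_cases hq : q.1 = k
      · have h1 : (CD.σrep j).act (1 - CD.P k)
            (Stmt2Aux.vec Gns j (Stmt2Aux.wprod R (q :: L'))) = 0 := by
          rw [Stmt2Aux.act_one_sub_P Gns CD, Stmt2Aux.P_vec_word_fix Gns CD j k q L' hR hq,
            sub_self]
        rw [h1, map_zero, map_zero, map_zero]
      · have h1 : (CD.σrep j).act (1 - CD.P k)
            (Stmt2Aux.vec Gns j (Stmt2Aux.wprod R (q :: L')))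
            = Stmt2Aux.vec Gns j (Stmt2Aux.wprod R (q :: L')) := by
          rw [Stmt2Aux.act_one_sub_P Gns CD, Stmt2Aux.P_vec_word_kill Gns CD j k q L' hR hq,
            sub_zero]
        have h2 : (CD.σrep j).act (CD.emb (R.incl k a))
            (Stmt2Aux.vec Gns j (Stmt2Aux.wprod R (q :: L')))
            = Stmt2Aux.vec Gns j (Stmt2Aux.wprod R (⟨k, Stmt2Aux.acirc Ek k a⟩ :: q :: L'))
              + Stmt2Aux.vec Gns j (Stmt2Aux.wprod R (⟨q.1, ι q.1 ((Ek k).toMap a) * q.2⟩ :: L')) := by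
          rw [Stmt2Aux.act_emb_vec Gns CD, Stmt2Aux.incl_mul_word R k a q L', Stmt2Aux.vec_add Gns]
        have h3 : (CD.σrep j).act (1 - CD.P k)
            (Stmt2Aux.vec Gns j (Stmt2Aux.wprod R (⟨k, Stmt2Aux.acirc Ek k a⟩ :: q :: L'))) = 0 := by
          rw [Stmt2Aux.act_one_sub_P Gns CD,
            Stmt2Aux.P_vec_word_fix Gns CD j k ⟨k, Stmt2Aux.acirc Ek k a⟩ (q :: L')
              (Stmt2Aux.red_cons_acirc a hR hq) rfl, sub_self]
        have h4 : (CD.σrep j).act (1 - CD.P k)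
            (Stmt2Aux.vec Gns j (Stmt2Aux.wprod R (⟨q.1, ι q.1 ((Ek k).toMap a) * q.2⟩ :: L')))
            = Stmt2Aux.vec Gns j (Stmt2Aux.wprod R (⟨q.1, ι q.1 ((Ek k).toMap a) * q.2⟩ :: L')) := by
          rw [Stmt2Aux.act_one_sub_P Gns CD,
            Stmt2Aux.P_vec_word_kill Gns CD j k _ L' (Stmt2Aux.red_head_mod hR _) hq, sub_zero]
        have h5 : (CD.σrep j).act (CD.emb (R.inclD ((Ek k).toMap a)))
            (Stmt2Aux.vec Gns j (Stmt2Aux.wprod R (q :: L')))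
            = Stmt2Aux.vec Gns j (Stmt2Aux.wprod R (⟨q.1, ι q.1 ((Ek k).toMap a) * q.2⟩ :: L')) := by
          rw [Stmt2Aux.act_emb_vec Gns CD, Stmt2Aux.inclD_mul_word]
        rw [h1, h2, map_add, h3, h4, h5, zero_add]
  · -- (ii') the identity `a° P_k^⊥ = P_k° a P_k^⊥` on the component `Y_k`
    intro k a
    rw [(CD.σrep k).act_mul]
    refine Stmt2Aux.clm_ext_good Gns k ?_
    intro g hg
    simp only [ContinuousLinearMap.comp_apply, ContinuousLinearMap.sub_apply]
    rcases hg with ⟨d, rfl⟩ | ⟨L, hne, hR, rfl⟩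
    · have h1 : (CD.σrep k).act (1 - CD.P k) (Stmt2Aux.vec Gns k (R.inclD d)) = 0 := by
        rw [Stmt2Aux.act_one_sub_P Gns CD, Stmt2Aux.P_vec_inclD_self Gns CD, sub_self]
      rw [h1, map_zero, map_zero, map_zero, map_zero, sub_zero]
    · obtain ⟨q, L', rfl⟩ := List.exists_cons_of_ne_nil hne
      by_cases hq : q.1 = k
      · have h1 : (CD.σrep k).act (1 - CD.P k)
            (Stmt2Aux.vec Gns k (Stmt2Aux.wprod R (q :: L'))) = 0 := by
          rw [Stmt2Aux.act_one_sub_P Gns CD, Stmt2Aux.P_vec_word_fix Gns CD k k q L' hR hq,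
            sub_self]
        rw [h1, map_zero, map_zero, map_zero, map_zero, sub_zero]
      · have h1 : (CD.σrep k).act (1 - CD.P k)
            (Stmt2Aux.vec Gns k (Stmt2Aux.wprod R (q :: L')))
            = Stmt2Aux.vec Gns k (Stmt2Aux.wprod R (q :: L')) := by
          rw [Stmt2Aux.act_one_sub_P Gns CD, Stmt2Aux.P_vec_word_kill Gns CD k k q L' hR hq,
            sub_zero]
        have h3 : (CD.σrep k).act (CD.emb (R.incl k a))
            (Stmt2Aux.vec Gns k (Stmt2Aux.wprod R (q :: L')))
            = Stmt2Aux.vec Gns k (Stmt2Aux.wprod R (⟨k, Stmt2Aux.acirc Ek k a⟩ :: q :: L'))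
              + Stmt2Aux.vec Gns k (Stmt2Aux.wprod R (⟨q.1, ι q.1 ((Ek k).toMap a) * q.2⟩ :: L')) := by
          rw [Stmt2Aux.act_emb_vec Gns CD, Stmt2Aux.incl_mul_word R k a q L', Stmt2Aux.vec_add Gns]
        have h2 : (CD.σrep k).act (CD.emb (R.incl k a - R.inclD ((Ek k).toMap a)))
            (Stmt2Aux.vec Gns k (Stmt2Aux.wprod R (q :: L')))
            = Stmt2Aux.vec Gns k (Stmt2Aux.wprod R (⟨k, Stmt2Aux.acirc Ek k a⟩ :: q :: L')) := by
          rw [map_sub, map_sub, ContinuousLinearMap.sub_apply, h3,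
            Stmt2Aux.act_emb_vec Gns CD, Stmt2Aux.inclD_mul_word, add_sub_cancel_right]
        have h4 : (CD.σrep k).act (CD.P k)
            (Stmt2Aux.vec Gns k (Stmt2Aux.wprod R (⟨k, Stmt2Aux.acirc Ek k a⟩ :: q :: L')))
            = Stmt2Aux.vec Gns k (Stmt2Aux.wprod R (⟨k, Stmt2Aux.acirc Ek k a⟩ :: q :: L')) :=
          Stmt2Aux.P_vec_word_fix Gns CD k k _ (q :: L') (Stmt2Aux.red_cons_acirc a hR hq) rfl
        have h5 : (CD.σrep k).act (CD.P k)
            (Stmt2Aux.vec Gns k (Stmt2Aux.wprod R (⟨q.1, ι q.1 ((Ek k).toMap a) * q.2⟩ :: L'))) = 0 :=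
          Stmt2Aux.P_vec_word_kill Gns CD k k _ L' (Stmt2Aux.red_head_mod hR _) hq
        have h6 : (Gns k).jones
            (Stmt2Aux.vec Gns k (Stmt2Aux.wprod R (⟨k, Stmt2Aux.acirc Ek k a⟩ :: q :: L'))) = 0 := by
          rw [Stmt2Aux.jones_vec Gns,
            Stmt2Aux.toMap_word_ne (Fexp := Fexp) k ⟨k, Stmt2Aux.acirc Ek k a⟩ (q :: L')
              (Stmt2Aux.red_cons_acirc a hR hq) (Or.inl (by simp)), map_zero]
        have h7 : (Gns k).jones
            (Stmt2Aux.vec Gns k (Stmt2Aux.wprod R (⟨q.1, ι q.1 ((Ek k).toMap a) * q.2⟩ :: L'))) = 0 := by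
          rw [Stmt2Aux.jones_vec Gns,
            Stmt2Aux.toMap_word_ne (Fexp := Fexp) k _ L' (Stmt2Aux.red_head_mod hR _)
              (Or.inr hq), map_zero]
        rw [h1, h2, h3, map_add, map_add, h4, h5, h6, h7, add_zero, add_zero, sub_zero]
  · -- (ii'') the identity on the components `Y_j`, `j ≠ k`
    intro j k hjk a
    rw [(CD.σrep j).act_mul, (CD.σrep j).act_mul, (CD.σrep j).act_mul]
    refine Stmt2Aux.clm_ext_good Gns j ?_
    intro g hg
    simp only [ContinuousLinearMap.comp_apply]
    rcases hg with ⟨d, rfl⟩ | ⟨L, hne, hR, rfl⟩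
    · have h1 : (CD.σrep j).act (1 - CD.P k) (Stmt2Aux.vec Gns j (R.inclD d))
          = Stmt2Aux.vec Gns j (R.inclD d) := by
        rw [Stmt2Aux.act_one_sub_P Gns CD, Stmt2Aux.P_vec_inclD_ne Gns CD hjk, sub_zero]
      have h3 : (CD.σrep j).act (CD.emb (R.incl k a)) (Stmt2Aux.vec Gns j (R.inclD d))
          = Stmt2Aux.vec Gns j (Stmt2Aux.wprod R [⟨k, Stmt2Aux.acirc Ek k a * ι k d⟩])
            + Stmt2Aux.vec Gns j (R.inclD ((Ek k).toMap a * d)) := by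
        rw [Stmt2Aux.act_emb_vec Gns CD, Stmt2Aux.incl_mul_inclD R k a d, Stmt2Aux.vec_add Gns]
      have h2 : (CD.σrep j).act (CD.emb (R.incl k a - R.inclD ((Ek k).toMap a)))
          (Stmt2Aux.vec Gns j (R.inclD d))
          = Stmt2Aux.vec Gns j (Stmt2Aux.wprod R [⟨k, Stmt2Aux.acirc Ek k a * ι k d⟩]) := by
        rw [map_sub, map_sub, ContinuousLinearMap.sub_apply, h3,
          Stmt2Aux.act_emb_vec Gns CD, ← map_mul, add_sub_cancel_right]
      have h4 : (CD.σrep j).act (CD.P k)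
          (Stmt2Aux.vec Gns j (Stmt2Aux.wprod R [⟨k, Stmt2Aux.acirc Ek k a * ι k d⟩]))
          = Stmt2Aux.vec Gns j (Stmt2Aux.wprod R [⟨k, Stmt2Aux.acirc Ek k a * ι k d⟩]) :=
        Stmt2Aux.P_vec_word_fix Gns CD j k _ []
          (Stmt2Aux.red_singleton
            (by rw [Stmt2Aux.Ek_mul_right, Stmt2Aux.Ek_acirc, zero_mul])) rfl
      have h5 : (CD.σrep j).act (CD.P k)
          (Stmt2Aux.vec Gns j (R.inclD ((Ek k).toMap a * d))) = 0 :=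
        Stmt2Aux.P_vec_inclD_ne Gns CD hjk _
      rw [h1, h2, h3, map_add, h4, h5, add_zero]
    · obtain ⟨q, L', rfl⟩ := List.exists_cons_of_ne_nil hne
      by_cases hq : q.1 = k
      · have h1 : (CD.σrep j).act (1 - CD.P k)
            (Stmt2Aux.vec Gns j (Stmt2Aux.wprod R (q :: L'))) = 0 := by
          rw [Stmt2Aux.act_one_sub_P Gns CD, Stmt2Aux.P_vec_word_fix Gns CD j k q L' hR hq,
            sub_self]
        rw [h1, map_zero, map_zero, map_zero]
      · have h1 : (CD.σrep j).act (1 - CD.P k)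
            (Stmt2Aux.vec Gns j (Stmt2Aux.wprod R (q :: L')))
            = Stmt2Aux.vec Gns j (Stmt2Aux.wprod R (q :: L')) := by
          rw [Stmt2Aux.act_one_sub_P Gns CD, Stmt2Aux.P_vec_word_kill Gns CD j k q L' hR hq,
            sub_zero]
        have h3 : (CD.σrep j).act (CD.emb (R.incl k a))
            (Stmt2Aux.vec Gns j (Stmt2Aux.wprod R (q :: L')))
            = Stmt2Aux.vec Gns j (Stmt2Aux.wprod R (⟨k, Stmt2Aux.acirc Ek k a⟩ :: q :: L'))
              + Stmt2Aux.vec Gns j (Stmt2Aux.wprod R (⟨q.1, ι q.1 ((Ek k).toMap a) * q.2⟩ :: L')) := by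
          rw [Stmt2Aux.act_emb_vec Gns CD, Stmt2Aux.incl_mul_word R k a q L', Stmt2Aux.vec_add Gns]
        have h2 : (CD.σrep j).act (CD.emb (R.incl k a - R.inclD ((Ek k).toMap a)))
            (Stmt2Aux.vec Gns j (Stmt2Aux.wprod R (q :: L')))
            = Stmt2Aux.vec Gns j (Stmt2Aux.wprod R (⟨k, Stmt2Aux.acirc Ek k a⟩ :: q :: L')) := by
          rw [map_sub, map_sub, ContinuousLinearMap.sub_apply, h3,
            Stmt2Aux.act_emb_vec Gns CD, Stmt2Aux.inclD_mul_word, add_sub_cancel_right]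
        have h4 : (CD.σrep j).act (CD.P k)
            (Stmt2Aux.vec Gns j (Stmt2Aux.wprod R (⟨k, Stmt2Aux.acirc Ek k a⟩ :: q :: L')))
            = Stmt2Aux.vec Gns j (Stmt2Aux.wprod R (⟨k, Stmt2Aux.acirc Ek k a⟩ :: q :: L')) :=
          Stmt2Aux.P_vec_word_fix Gns CD j k _ (q :: L') (Stmt2Aux.red_cons_acirc a hR hq) rfl
        have h5 : (CD.σrep j).act (CD.P k)
            (Stmt2Aux.vec Gns j (Stmt2Aux.wprod R (⟨q.1, ι q.1 ((Ek k).toMap a) * q.2⟩ :: L'))) = 0 :=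
          Stmt2Aux.P_vec_word_kill Gns CD j k _ L' (Stmt2Aux.red_head_mod hR _) hq
        rw [h1, h2, h3, map_add, h4, h5, add_zero]
  · -- (iii) the conditional expectation onto `A k`
    intro k
    refine ⟨{ toMap := Stmt2Aux.EΔlin Gns CD k
              map_star := Stmt2Aux.EΔlin_star Gns CD k
              retract := fun a => by
                simpa using Stmt2Aux.EΔlin_retract Gns CD k a
              bimod := fun b δ b' => by
                simpa using Stmt2Aux.EΔlin_bimod Gns CD k b δ b'
              cp := Stmt2Aux.EΔlin_cp Gns CD k
              contractive := Stmt2Aux.EΔlin_contractive Gns CD k },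
      fun y => Stmt2Aux.EΔlin_emb Gns CD k y, ?_⟩
    intro δ
    ext v
    simp only [ContinuousLinearMap.comp_apply]
    rw [(Gns k).jones_apply v, (CD.σrep k).act_rsmul, (Gns k).jones_apply,
      (Gns k).mod.inner_rsmul_right, (Gns k).rep.act_rsmul, ← (Gns k).cyc_rsmul,
      (Gns k).mod.rsmul_assoc]
    rfl

end
end

section
/- Let D ⊂ A be a unital inclusion of C*-algebras with conditional expectation E : A → D, and let 𝓑 be the universal unital C*-algebra generated by a unital copy of A and a projection e such that e a e = E(a) e for all a ∈ A. A unital *-homomorphism ρ from 𝓑 into a unital C*-algebra is injective provided the restrictions ρ|_A and ρ|_{De} are injective and ρ(A) ∩ closed-span ρ(AeA) = {0}. -/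
/-! ### The universal Jones extension `𝓑 = C*(A, e)` of a conditional expectation -/

noncomputable section

universe u v

/-- The universal unital C*-algebra `𝓑` generated by a unital copy of `A` and a
projection `e` subject to the relations `e a e = E(a) e` (`a ∈ A`). -/
structure JonesExtension {D : Type u} {A : Type u} [CStarAlgebra D] [CStarAlgebra A]
    (ι : D →⋆ₐ[ℂ] A) (E : CondExp D A ι) (𝓑 : Type u) [CStarAlgebra 𝓑] :
    Type (u + 1) where
  inclA : A →⋆ₐ[ℂ] 𝓑
  e : 𝓑
  e_sa : star e = e
  e_idem : e * e = e
  rel : ∀ a : A, e * inclA a * e = inclA (ι (E.toMap a)) * e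
  generates : GeneratesCStar (Set.range inclA ∪ {e})
  universal : ∀ (C : Type u) [CStarAlgebra C] (π : A →⋆ₐ[ℂ] C) (p : C),
    star p = p → p * p = p → (∀ a, p * π a * p = π (ι (E.toMap a)) * p) →
    ∃! ρ : 𝓑 →⋆ₐ[ℂ] C, ρ.comp inclA = π ∧ ρ e = p

end


/-! ### Statement 3

A unital *-homomorphism `ρ` from the universal Jones extension `𝓑` of `(D ⊆ A, E)` into
a unital C*-algebra is injective provided its restrictions to (the copies of) `A` and
`De` are injective and `ρ(A) ∩ closed-span ρ(A e A) = {0}`. -/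

noncomputable section

universe u


/-- If two non-unital star homomorphisms out of a C*-algebra have nested kernels,
their norms are comparable. -/
lemma normle_of_ker_le {D B₁ B₂ : Type*} [CStarAlgebra D] [CStarAlgebra B₁] [CStarAlgebra B₂]
    (π₁ : D →⋆ₙₐ[ℂ] B₁) (π₂ : D →⋆ₙₐ[ℂ] B₂) (hker : ∀ d, π₂ d = 0 → π₁ d = 0) (d : D) :
    ‖π₁ d‖ ≤ ‖π₂ d‖ := by
  have hsa : ∀ d : D, IsSelfAdjoint d → ‖π₁ d‖ ≤ ‖π₂ d‖ := by
    intro d hd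
    set r := ‖π₂ d‖ with hr
    have hr0 : (0:ℝ) ≤ r := norm_nonneg _
    set g : ℝ → ℝ := fun t => max (-r) (min r t) with hgdef
    set f : ℝ → ℝ := fun t => t - g t with hfdef
    have hg0 : g 0 = 0 := by
      simp [hgdef, min_eq_right hr0, max_eq_right (neg_nonpos.mpr hr0)]
    have hf0 : f 0 = 0 := by simp [hfdef, hg0]
    have hgc : Continuous g := continuous_const.max (continuous_const.min continuous_id)
    have hfc : Continuous f := continuous_id.sub hgc
    have hπ₂d : IsSelfAdjoint (π₂ d) := hd.map π₂
    have hπ₁d : IsSelfAdjoint (π₁ d) := hd.map π₁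
    have hcont₁ : Continuous π₁ := by
      exact AddMonoidHomClass.continuous_of_bound π₁ 1 fun x => by
        simpa using NonUnitalStarAlgHom.norm_apply_le π₁ x
    have hcont₂ : Continuous π₂ := by
      exact AddMonoidHomClass.continuous_of_bound π₂ 1 fun x => by
        simpa using NonUnitalStarAlgHom.norm_apply_le π₂ x
    have hspec : ∀ x ∈ quasispectrum ℝ (π₂ d), f x = 0 := by
      intro x hx
      have hb : ‖x‖ ≤ ‖π₂ d‖ := by
        have := norm_apply_le_norm_cfcₙ (id : ℝ → ℝ) (π₂ d) hx
        rwa [cfcₙ_id ℝ (π₂ d)] at this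
      rw [Real.norm_eq_abs, abs_le] at hb
      have hgx : g x = x := by
        rw [hgdef]
        simp only [min_eq_right hb.2]
        exact (congrArg (max (-r)) (min_eq_right hb.2)).trans (max_eq_right hb.1)
      simp [hfdef, hgx]
    have h2 : cfcₙ f (π₂ d) = 0 := by
      rw [cfcₙ_congr (g := (0 : ℝ → ℝ)) (fun x hx => hspec x hx)]
      exact cfcₙ_zero ℝ _
    have h3 : π₂ (cfcₙ f d) = 0 := by
      rw [NonUnitalStarAlgHom.map_cfcₙ π₂ f d hfc.continuousOn hf0 hcont₂ hd hπ₂d]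
      exact h2
    have h4 : π₁ (cfcₙ f d) = 0 := hker _ h3
    have h5 : cfcₙ f (π₁ d) = 0 := by
      rw [← NonUnitalStarAlgHom.map_cfcₙ π₁ f d hfc.continuousOn hf0 hcont₁ hd hπ₁d]
      exact h4
    have hidsum : (fun x : ℝ => g x + f x) = id := by
      funext t; simp [hfdef]
    have h6 : π₁ d = cfcₙ g (π₁ d) := by
      conv_lhs => rw [← cfcₙ_id ℝ (π₁ d), ← hidsum]
      rw [cfcₙ_add (a := π₁ d) (f := g) (g := f) (hf := hgc.continuousOn) (hf0 := hg0)
        (hg := hfc.continuousOn) (hg0 := hf0), h5, add_zero]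
    rw [h6]
    refine norm_cfcₙ_le fun x hx => ?_
    rw [Real.norm_eq_abs, abs_le]
    constructor
    · exact le_max_left _ _
    · exact max_le (by linarith) (min_le_left _ _)
  have key := hsa (star d * d) (IsSelfAdjoint.star_mul_self d)
  have h2 : ‖π₁ d‖ ^ 2 ≤ ‖π₂ d‖ ^ 2 := by
    rw [sq, sq, ← CStarRing.norm_star_mul_self, ← CStarRing.norm_star_mul_self,
      ← map_star, ← map_mul, ← map_star, ← map_mul]
    exact key
  exact (pow_le_pow_iff_left₀ (norm_nonneg _) (norm_nonneg _) two_ne_zero).mp h2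

theorem stmt_3 {D A : Type u} [CStarAlgebra D] [CStarAlgebra A] (ι : D →⋆ₐ[ℂ] A)
    (hι : Function.Injective ι) (E : CondExp D A ι) (𝓑 : Type u) [CStarAlgebra 𝓑]
    (J : JonesExtension ι E 𝓑) (C : Type u) [CStarAlgebra C] (ρ : 𝓑 →⋆ₐ[ℂ] C)
    (hA : Function.Injective fun a : A => ρ (J.inclA a))
    (hDe : Set.InjOn ρ {x : 𝓑 | ∃ d : D, x = J.inclA (ι d) * J.e})
    (hzero : ∀ a : A,
      ρ (J.inclA a) ∈ closure ((Submodule.span ℂ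
          {y : C | ∃ b c : A, y = ρ (J.inclA b * J.e * J.inclA c)} : Submodule ℂ C) : Set C) →
      ρ (J.inclA a) = 0) :
    Function.Injective ρ := by
  classical
  -- the copy of `D` inside `𝓑`
  set κ : D →⋆ₐ[ℂ] 𝓑 := J.inclA.comp ι with hκ
  have hκapp : ∀ d : D, κ d = J.inclA (ι d) := fun d => rfl
  have h1 : ∀ d : D, J.e * κ d * J.e = κ d * J.e := by
    intro d
    have := J.rel (ι d)
    rwa [E.retract] at this
  -- continuity facts
  have hρc : Continuous ρ := AddMonoidHomClass.continuous_of_bound ρ 1 fun x => by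
    simpa using NonUnitalStarAlgHom.norm_apply_le ρ x
  have hinclc : Continuous J.inclA := AddMonoidHomClass.continuous_of_bound J.inclA 1 fun x => by
    simpa using NonUnitalStarAlgHom.norm_apply_le J.inclA x
  -- the basic sets and submodules
  set G₂ : Set 𝓑 := {x | ∃ b c : A, x = J.inclA b * J.e * J.inclA c} with hG₂def
  set V₂ : Submodule ℂ 𝓑 := Submodule.span ℂ G₂ with hV₂def
  set W : Submodule ℂ 𝓑 := Submodule.span ℂ (Set.range J.inclA ∪ G₂) with hWdef
  -- generator multiplication rules
  have hmulL : ∀ a : A, ∀ x ∈ G₂, J.inclA a * x ∈ G₂ := by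
    rintro a _ ⟨b, c, rfl⟩
    exact ⟨a * b, c, by simp [map_mul, mul_assoc]⟩
  have hmulR : ∀ a : A, ∀ x ∈ G₂, x * J.inclA a ∈ G₂ := by
    rintro a _ ⟨b, c, rfl⟩
    exact ⟨b, c * a, by simp [map_mul, mul_assoc]⟩
  have hgenmul : ∀ x ∈ G₂, ∀ y ∈ G₂, x * y ∈ G₂ := by
    rintro _ ⟨b, c, rfl⟩ _ ⟨b', c', rfl⟩
    refine ⟨b * ι (E.toMap (c * b')), c', ?_⟩
    have hrel := J.rel (c * b')
    calc (J.inclA b * J.e * J.inclA c) * (J.inclA b' * J.e * J.inclA c')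
        = J.inclA b * (J.e * J.inclA (c * b') * J.e) * J.inclA c' := by
          simp [map_mul, mul_assoc]
      _ = J.inclA (b * ι (E.toMap (c * b'))) * J.e * J.inclA c' := by
          rw [hrel]; simp [map_mul, mul_assoc]
  -- span-level multiplication rules
  have hWV₂ : ∀ v ∈ W, ∀ w ∈ V₂, v * w ∈ V₂ := by
    intro v hv w hw
    induction hw using Submodule.span_induction with
    | mem x hx =>
      induction hv using Submodule.span_induction with
      | mem u hu =>
        rcases hu with ⟨a, rfl⟩ | hu
        · exact Submodule.subset_span (hmulL a x hx)
        · exact Submodule.subset_span (hgenmul u hu x hx)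
      | zero => rw [zero_mul]; exact V₂.zero_mem
      | add p q _ _ hp' hq' => rw [add_mul]; exact V₂.add_mem hp' hq'
      | smul c p _ hp' => rw [smul_mul_assoc]; exact V₂.smul_mem c hp'
    | zero => rw [mul_zero]; exact V₂.zero_mem
    | add p q _ _ hp' hq' => rw [mul_add]; exact V₂.add_mem hp' hq'
    | smul c p _ hp' => rw [mul_smul_comm]; exact V₂.smul_mem c hp'
  have hV₂W : ∀ v ∈ W, ∀ w ∈ V₂, w * v ∈ V₂ := by
    intro v hv w hw
    induction hw using Submodule.span_induction with
    | mem x hx =>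
      induction hv using Submodule.span_induction with
      | mem u hu =>
        rcases hu with ⟨a, rfl⟩ | hu
        · exact Submodule.subset_span (hmulR a x hx)
        · exact Submodule.subset_span (hgenmul x hx u hu)
      | zero => rw [mul_zero]; exact V₂.zero_mem
      | add p q _ _ hp' hq' => rw [mul_add]; exact V₂.add_mem hp' hq'
      | smul c p _ hp' => rw [mul_smul_comm]; exact V₂.smul_mem c hp'
    | zero => rw [zero_mul]; exact V₂.zero_mem
    | add p q _ _ hp' hq' => rw [add_mul]; exact V₂.add_mem hp' hq'
    | smul c p _ hp' => rw [smul_mul_assoc]; exact V₂.smul_mem c hp'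
  -- `W` is a star subalgebra
  have hGW : ∀ x ∈ Set.range J.inclA ∪ G₂, ∀ y ∈ Set.range J.inclA ∪ G₂, x * y ∈ W := by
    rintro x hx y hy
    rcases hx with ⟨a, rfl⟩ | hx
    · rcases hy with ⟨b, rfl⟩ | hy
      · exact Submodule.subset_span (Or.inl ⟨a * b, by simp [map_mul]⟩)
      · exact Submodule.subset_span (Or.inr (hmulL a y hy))
    · rcases hy with ⟨b, rfl⟩ | hy
      · exact Submodule.subset_span (Or.inr (hmulR b x hx))
      · exact Submodule.subset_span (Or.inr (hgenmul x hx y hy))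
  have hWmul : ∀ x y, x ∈ W → y ∈ W → x * y ∈ W := by
    intro x y hx hy
    induction hx using Submodule.span_induction with
    | mem u hu =>
      induction hy using Submodule.span_induction with
      | mem v hv => exact hGW u hu v hv
      | zero => rw [mul_zero]; exact W.zero_mem
      | add p q _ _ hp' hq' => rw [mul_add]; exact W.add_mem hp' hq'
      | smul c p _ hp' => rw [mul_smul_comm]; exact W.smul_mem c hp'
    | zero => rw [zero_mul]; exact W.zero_mem
    | add p q _ _ hp' hq' => rw [add_mul]; exact W.add_mem hp' hq'
    | smul c p _ hp' => rw [smul_mul_assoc]; exact W.smul_mem c hp'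
  have hWstar : ∀ x ∈ W, star x ∈ W := by
    intro x hx
    induction hx using Submodule.span_induction with
    | mem u hu =>
      rcases hu with ⟨a, rfl⟩ | ⟨b, c, rfl⟩
      · exact Submodule.subset_span (Or.inl ⟨star a, by simp [map_star]⟩)
      · refine Submodule.subset_span (Or.inr ⟨star c, star b, ?_⟩)
        simp [star_mul, mul_assoc, J.e_sa, map_star]
    | zero => rw [star_zero]; exact W.zero_mem
    | add p q _ _ hp' hq' => rw [star_add]; exact W.add_mem hp' hq'
    | smul c p _ hp' => rw [star_smul]; exact W.smul_mem _ hp'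
  have hW1 : (1 : 𝓑) ∈ W := Submodule.subset_span (Or.inl ⟨1, map_one J.inclA⟩)
  -- density of `W`
  have hdense : Dense (W : Set 𝓑) := by
    let 𝕎 : StarSubalgebra ℂ 𝓑 :=
      { W.toSubalgebra hW1 hWmul with star_mem' := fun {a} ha => hWstar a ha }
    have hsub : Set.range J.inclA ∪ {J.e} ⊆ (𝕎 : Set 𝓑) := by
      rintro x (hx | hx)
      · exact Submodule.subset_span (Or.inl hx)
      · rw [Set.mem_singleton_iff] at hx; subst hx
        exact Submodule.subset_span (Or.inr ⟨1, 1, by simp⟩)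
    have hle := StarAlgebra.adjoin_le hsub
    exact J.generates.mono fun x hx => hle hx
  -- the closed ideal `closure V₂`
  have hIl : ∀ z : 𝓑, ∀ y ∈ closure (V₂ : Set 𝓑), z * y ∈ closure (V₂ : Set 𝓑) := by
    have step1 : ∀ w ∈ V₂, ∀ z : 𝓑, z * w ∈ closure (V₂ : Set 𝓑) := by
      intro w hw z
      exact map_mem_closure (f := fun b => b * w) (continuous_mul_right w) (hdense z)
        fun v hv => hWV₂ v hv w hw
    intro z y hy
    have := map_mem_closure (continuous_mul_left z) hy fun w hw => step1 w hw z
    rwa [closure_closure] at this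
  have hIr : ∀ z : 𝓑, ∀ y ∈ closure (V₂ : Set 𝓑), y * z ∈ closure (V₂ : Set 𝓑) := by
    have step1 : ∀ w ∈ V₂, ∀ z : 𝓑, w * z ∈ closure (V₂ : Set 𝓑) := by
      intro w hw z
      exact map_mem_closure (f := fun b => w * b) (continuous_mul_left w) (hdense z)
        fun v hv => hV₂W v hv w hw
    intro z y hy
    have := map_mem_closure (continuous_mul_right z) hy fun w hw => step1 w hw z
    rwa [closure_closure] at this
  -- the canonical expectation `σ : 𝓑 → A` killing the ideal
  obtain ⟨σ, ⟨hσA, hσe⟩, -⟩ := J.universal A (StarAlgHom.id ℂ A) 0 (star_zero _) (mul_zero 0)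
    (fun a => by simp)
  have hσAa : ∀ a : A, σ (J.inclA a) = a := by
    intro a
    have := DFunLike.congr_fun hσA a
    simpa using this
  have hσc : Continuous σ := AddMonoidHomClass.continuous_of_bound σ 1 fun x => by
    simpa using NonUnitalStarAlgHom.norm_apply_le σ x
  have hσV₂ : ∀ w ∈ V₂, σ w = 0 := by
    intro w hw
    induction hw using Submodule.span_induction with
    | mem x hx =>
      obtain ⟨b, c, rfl⟩ := hx
      simp [map_mul, hσe]
    | zero => simp
    | add p q _ _ hp' hq' => rw [map_add, hp', hq', add_zero]
    | smul c p _ hp' => rw [map_smul, hp', smul_zero]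
  -- decomposition of an arbitrary element
  have hvdec : ∀ v ∈ W, v - J.inclA (σ v) ∈ V₂ := by
    intro v hv
    induction hv using Submodule.span_induction with
    | mem u hu =>
      rcases hu with ⟨a, rfl⟩ | hu
      · rw [hσAa a, sub_self]; exact V₂.zero_mem
      · have h0 : σ u = 0 := hσV₂ u (Submodule.subset_span hu)
        rw [h0, map_zero, sub_zero]
        exact Submodule.subset_span hu
    | zero => simpa using V₂.zero_mem
    | add p q _ _ hp' hq' =>
      have heq : (p + q) - J.inclA (σ (p + q)) =
          (p - J.inclA (σ p)) + (q - J.inclA (σ q)) := by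
        rw [map_add, map_add]; abel
      rw [heq]; exact V₂.add_mem hp' hq'
    | smul c p _ hp' =>
      have heq : (c • p) - J.inclA (σ (c • p)) = c • (p - J.inclA (σ p)) := by
        rw [map_smul, map_smul, smul_sub]
      rw [heq]; exact V₂.smul_mem c hp'
  have hdecomp : ∀ x : 𝓑, x - J.inclA (σ x) ∈ closure (V₂ : Set 𝓑) := by
    intro x
    have hcont : Continuous fun z : 𝓑 => z - J.inclA (σ z) :=
      continuous_id.sub (hinclc.comp hσc)
    exact map_mem_closure (f := fun z : 𝓑 => z - J.inclA (σ z)) hcont (hdense x)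
      fun v hv => hvdec v hv
  -- the map `φ : D → 𝓑`, `d ↦ ι(d) e`, as a non-unital star homomorphism
  let φ : D →⋆ₙₐ[ℂ] 𝓑 :=
    { toFun := fun d => J.e * κ d * J.e
      map_add' := fun d d' => by simp [map_add, mul_add, add_mul]
      map_smul' := fun c d => by simp [map_smul, mul_smul_comm, smul_mul_assoc]
      map_zero' := by simp
      map_mul' := fun d d' => by
        show J.e * κ (d * d') * J.e = (J.e * κ d * J.e) * (J.e * κ d' * J.e)
        rw [h1 (d * d'), h1 d, h1 d']
        calc κ (d * d') * J.e = κ d * (J.e * κ d' * J.e) := by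
              rw [h1 d', map_mul, mul_assoc]
          _ = (κ d * J.e) * (κ d' * J.e) := by simp [mul_assoc]
      map_star' := fun d => by
        show J.e * κ (star d) * J.e = star (J.e * κ d * J.e)
        simp [star_mul, mul_assoc, J.e_sa, map_star] }
  have hφ_eq : ∀ d : D, φ d = κ d * J.e := fun d => h1 d
  -- `ρ ∘ φ`
  let π₂ : D →⋆ₙₐ[ℂ] C :=
    { toFun := fun d => ρ (φ d)
      map_add' := fun d d' => by simp [map_add]
      map_smul' := fun c d => by simp [map_smul]
      map_zero' := by simp
      map_mul' := fun d d' => by simp [map_mul]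
      map_star' := fun d => by simp [map_star] }
  have hker : ∀ d, π₂ d = 0 → φ d = 0 := by
    intro d hd
    have h0mem : (0 : 𝓑) ∈ {x : 𝓑 | ∃ d : D, x = J.inclA (ι d) * J.e} := ⟨0, by simp⟩
    have hmem : φ d ∈ {x : 𝓑 | ∃ d : D, x = J.inclA (ι d) * J.e} := ⟨d, hφ_eq d⟩
    have hρ0 : ρ (φ d) = ρ 0 := by rw [map_zero]; exact hd
    exact hDe hmem h0mem hρ0
  -- norm comparison on the closure of the range of `φ`
  have hnormle : ∀ u ∈ closure (Set.range φ), ρ u = 0 → u = 0 := by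
    intro u hu hρu
    have hball : ∀ u ∈ Set.range φ, u ∈ {u : 𝓑 | ‖u‖ ≤ ‖ρ u‖} := by
      rintro _ ⟨d, rfl⟩
      exact normle_of_ker_le φ π₂ hker d
    have hclosed : IsClosed {u : 𝓑 | ‖u‖ ≤ ‖ρ u‖} :=
      isClosed_le continuous_norm hρc.norm
    have hle : ‖u‖ ≤ ‖ρ u‖ := hclosed.closure_subset_iff.mpr hball hu
    rw [hρu, norm_zero] at hle
    exact norm_le_zero_iff.mp hle
  -- compressions `e ⬝ e` of the ideal land in `De`
  have hC1 : ∀ w ∈ closure (V₂ : Set 𝓑), ρ w = 0 → J.e * w * J.e = 0 := by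
    intro w hw hρw
    have hmapsto : ∀ v ∈ V₂, J.e * v * J.e ∈ Set.range φ := by
      intro v hv
      induction hv using Submodule.span_induction with
      | mem x hx =>
        obtain ⟨b, c, rfl⟩ := hx
        refine ⟨E.toMap b * E.toMap c, ?_⟩
        rw [hφ_eq]
        calc κ (E.toMap b * E.toMap c) * J.e
            = J.inclA (ι (E.toMap b)) * (J.inclA (ι (E.toMap c)) * J.e) := by
              simp [map_mul, mul_assoc, hκapp]
          _ = J.inclA (ι (E.toMap b)) * (J.e * J.inclA c * J.e) := by rw [J.rel c]
          _ = (J.e * J.inclA b * J.e) * (J.inclA c * J.e) := by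
              rw [J.rel b]; simp [mul_assoc]
          _ = J.e * (J.inclA b * J.e * J.inclA c) * J.e := by simp [mul_assoc]
      | zero => exact ⟨0, by simp⟩
      | add p q _ _ hp' hq' =>
        obtain ⟨dp, hdp⟩ := hp'
        obtain ⟨dq, hdq⟩ := hq'
        exact ⟨dp + dq, by rw [map_add, hdp, hdq]; noncomm_ring⟩
      | smul c p _ hp' =>
        obtain ⟨dp, hdp⟩ := hp'
        exact ⟨c • dp, by rw [map_smul, hdp]; simp [mul_smul_comm, smul_mul_assoc]⟩
    have hcont : Continuous fun u : 𝓑 => J.e * u * J.e :=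
      (continuous_mul_right J.e).comp (continuous_mul_left J.e)
    have hclose : J.e * w * J.e ∈ closure (Set.range φ) :=
      map_mem_closure (f := fun u : 𝓑 => J.e * u * J.e) hcont hw hmapsto
    refine hnormle _ hclose ?_
    rw [map_mul, map_mul, hρw, mul_zero, zero_mul]
  -- vanishing of `e a y` for `y` in the ideal with `ρ y = 0`
  have hC2 : ∀ y ∈ closure (V₂ : Set 𝓑), ρ y = 0 → ∀ a : A,
      J.e * (J.inclA a * y) = 0 := by
    intro y hy hρy a
    set w : 𝓑 := J.inclA a * (y * (star y * J.inclA (star a))) with hwdef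
    have hwmem : w ∈ closure (V₂ : Set 𝓑) :=
      hIl (J.inclA a) _ (hIr (star y * J.inclA (star a)) y hy)
    have hρw : ρ w = 0 := by rw [hwdef]; simp [map_mul, hρy]
    have ht : (J.e * (J.inclA a * y)) * star (J.e * (J.inclA a * y)) = J.e * w * J.e := by
      rw [hwdef]
      simp [star_mul, J.e_sa, map_star, mul_assoc]
    have h0 := hC1 w hwmem hρw
    exact (CStarRing.mul_star_self_eq_zero_iff _).mp (by rw [ht]; exact h0)
  -- kernel of `ρ` meets the ideal trivially
  have hC : ∀ y ∈ closure (V₂ : Set 𝓑), ρ y = 0 → y = 0 := by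
    intro y hy hρy
    have hgen : ∀ w ∈ V₂, star w * y = 0 := by
      intro w hw
      induction hw using Submodule.span_induction with
      | mem x hx =>
        obtain ⟨b, c, rfl⟩ := hx
        have h2 := hC2 y hy hρy (star b)
        calc star (J.inclA b * J.e * J.inclA c) * y
            = J.inclA (star c) * (J.e * (J.inclA (star b) * y)) := by
              simp [star_mul, mul_assoc, J.e_sa, map_star]
          _ = 0 := by rw [h2, mul_zero]
      | zero => rw [star_zero, zero_mul]
      | add p q _ _ hp' hq' => rw [star_add, add_mul, hp', hq', add_zero]
      | smul c p _ hp' => rw [star_smul, smul_mul_assoc, hp', smul_zero]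
    have hcont : Continuous fun w : 𝓑 => star w * y :=
      (continuous_mul_right y).comp continuous_star
    have hsy : star y * y ∈ closure ({0} : Set 𝓑) :=
      map_mem_closure (f := fun w : 𝓑 => star w * y) hcont hy fun w hw => by
        show star w * y ∈ ({0} : Set 𝓑)
        rw [hgen w hw]; exact Set.mem_singleton 0
    rw [closure_singleton, Set.mem_singleton_iff] at hsy
    exact (CStarRing.star_mul_self_eq_zero_iff y).mp hsy
  -- main argument
  have hmain : ∀ x : 𝓑, ρ x = 0 → x = 0 := by
    intro x hx
    have hy : x - J.inclA (σ x) ∈ closure (V₂ : Set 𝓑) := hdecomp x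
    have hρy : ρ (x - J.inclA (σ x)) = - ρ (J.inclA (σ x)) := by
      rw [map_sub, hx, zero_sub]
    set V₂' : Submodule ℂ C :=
      Submodule.span ℂ {y : C | ∃ b c : A, y = ρ (J.inclA b * J.e * J.inclA c)} with hV₂'def
    have hρmem : ρ (x - J.inclA (σ x)) ∈ closure (V₂' : Set C) := by
      refine map_mem_closure hρc hy ?_
      intro w hw
      induction hw using Submodule.span_induction with
      | mem u hu =>
        obtain ⟨b, c, rfl⟩ := hu
        exact Submodule.subset_span ⟨b, c, rfl⟩
      | zero => rw [map_zero]; exact V₂'.zero_mem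
      | add p q _ _ hp' hq' => rw [map_add]; exact V₂'.add_mem hp' hq'
      | smul c p _ hp' => rw [map_smul]; exact V₂'.smul_mem c hp'
    have hneg : ρ (J.inclA (σ x)) ∈ closure (V₂' : Set C) := by
      have heq : ρ (J.inclA (σ x)) = - (ρ (x - J.inclA (σ x))) := by rw [hρy, neg_neg]
      rw [heq]
      exact (Submodule.topologicalClosure V₂').neg_mem hρmem
    have h0 : ρ (J.inclA (σ x)) = 0 := hzero (σ x) hneg
    have ha0 : σ x = 0 := hA (show ρ (J.inclA (σ x)) = ρ (J.inclA 0) by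
      rw [h0, map_zero, map_zero])
    rw [ha0, map_zero, sub_zero] at hy
    exact hC x hy hx
  intro x y hxy
  have hsub : ρ (x - y) = 0 := by rw [map_sub, hxy, sub_self]
  exact sub_eq_zero.mp (hmain _ hsub)


end
end

section
/- Let D ⊂ A be a unital inclusion with nondegenerate conditional expectation E, GNS correspondence (X, φ_X, ξ_0), X° = X ⊖ ξ_0 D, 𝓑 the split extension associated with (D ⊂ A, E), and B = (1−e)𝓑(1−e). Then there exists an isometric linear map t° : X° → (1−e)𝓑e such that: t°(aξ_0) = ae = (1−e)ae for a ∈ A° = ker E; t°(ξ)* t°(η) = ⟨ξ, η⟩ e for ξ, η ∈ X°; and t°(bξd) = b t°(ξ) d for b ∈ B, ξ ∈ X°, d ∈ D. -/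
/-! ### Statement 4

For the split extension `𝓑 = C*(A, e_D) ⊆ A ⊕ L(X)` associated with `(D ⊆ A, E)` and
`B = (1-e)𝓑(1-e)`, there is an isometric linear map `t° : X° → (1-e)𝓑e` with
`t°(aξ₀) = ae = (1-e)ae` for `a ∈ A°`, `t°(ξ)* t°(η) = ⟨ξ,η⟩e`, and
`t°(bξd) = b t°(ξ) d` for `b ∈ B`, `ξ ∈ X°`, `d ∈ D`. -/

noncomputable section

universe u v

namespace Stmt4

variable {D A : Type u} [CStarAlgebra D] [CStarAlgebra A] {ι : D →⋆ₐ[ℂ] A}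
  {E : CondExp D A ι} {X : Type v} [NormedAddCommGroup X] [NormedSpace ℂ X]
  [CompleteSpace X]

/-- The copy of `a ∈ A` inside `A ⊕ L(X)`. -/
def aElem (G : GNSRep ι E X) (a : A) : A × (X →L[ℂ] X) := (a, G.rep.act a)

/-- The Jones projection `e = 0 ⊕ e_D` inside `A ⊕ L(X)`. -/
def eElem (G : GNSRep ι E X) : A × (X →L[ℂ] X) := (0, G.jones)

/-- The copy of `d ∈ D` inside `A ⊕ L(X)`. -/
def dElem (G : GNSRep ι E X) (d : D) : A × (X →L[ℂ] X) := aElem G (ι d)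

/-- The adjoint operation on `A ⊕ L(X)`. -/
def pstar (G : GNSRep ι E X) (p : A × (X →L[ℂ] X)) : A × (X →L[ℂ] X) :=
  (star p.1, G.mod.adj p.2)

/-- The split extension `𝓑 = C*({a ⊕ φ_X(a)}, 0 ⊕ e_D) ⊆ A ⊕ L(X)`. -/
def calB (G : GNSRep ι E X) : Set (A × (X →L[ℂ] X)) :=
  closure ((Algebra.adjoin ℂ (Set.range (aElem G) ∪ {eElem G}) :
    Subalgebra ℂ (A × (X →L[ℂ] X))) : Set _)

/-- The semisplit extension `B = (1-e) 𝓑 (1-e)`. -/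
def Bset (G : GNSRep ι E X) : Set (A × (X →L[ℂ] X)) :=
  {p | ∃ z ∈ calB G, p = (1 - eElem G) * z * (1 - eElem G)}

/-- The submodule `X° = X ⊖ ξ₀D`. -/
def Xc (G : GNSRep ι E X) : Submodule ℂ X where
  carrier := {x | G.mod.inner G.cyc x = 0}
  add_mem' := by
    intro a b ha hb
    have h := G.mod.inner_add_right G.cyc a b
    simp only [Set.mem_setOf_eq] at *
    rw [h, ha, hb, add_zero]
  zero_mem' := by
    have h := G.mod.inner_add_right G.cyc 0 0
    rw [add_zero] at h
    exact (left_eq_add.mp h)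
  smul_mem' := by
    intro c x hx
    have h := G.mod.inner_smul_right c G.cyc x
    simp only [Set.mem_setOf_eq] at *
    rw [h, hx, smul_zero]

end Stmt4

open Stmt4

namespace Stmt4Aux

section ModAux

variable {D : Type u} [CStarAlgebra D] {X : Type v} [NormedAddCommGroup X]
  [NormedSpace ℂ X] [CompleteSpace X] (M : HilbMod D X)

lemma inner_zero_right (x : X) : M.inner x 0 = 0 := by
  have h := M.inner_add_right x 0 0
  rw [add_zero] at h
  exact (left_eq_add.mp h)

lemma inner_neg_right (x y : X) : M.inner x (-y) = - M.inner x y := by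
  have h := M.inner_smul_right (-1 : ℂ) x y
  simpa [neg_one_smul] using h

lemma inner_sub_right (x y z : X) : M.inner x (y - z) = M.inner x y - M.inner x z := by
  rw [sub_eq_add_neg, M.inner_add_right, inner_neg_right, sub_eq_add_neg]

lemma inner_add_left (x y z : X) : M.inner (x + y) z = M.inner x z + M.inner y z := by
  rw [← M.star_inner, M.inner_add_right, star_add, M.star_inner, M.star_inner]

lemma eq_zero_of_inner_self (x : X) (h : M.inner x x = 0) : x = 0 := by
  have h2 := M.norm_inner x
  rw [h, norm_zero] at h2
  have h3 : ‖x‖ = 0 := by nlinarith [norm_nonneg x]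
  exact norm_eq_zero.mp h3

lemma ext_inner_left (x y : X) (h : ∀ z, M.inner z x = M.inner z y) : x = y := by
  have h2 : M.inner (x - y) (x - y) = 0 := by
    rw [inner_sub_right, h (x - y), sub_self]
  exact sub_eq_zero.mp (eq_zero_of_inner_self M _ h2)

lemma inner_rsmul_left (x y : X) (d : D) :
    M.inner (M.rsmul x d) y = star d * M.inner x y := by
  rw [← M.star_inner, M.inner_rsmul_right, star_mul, M.star_inner]

lemma inner_rsmul_self (x : X) (d : D) :
    M.inner (M.rsmul x d) (M.rsmul x d) = star d * M.inner x x * d := by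
  rw [M.inner_rsmul_right, inner_rsmul_left]

lemma norm_rsmul_le (x : X) (d : D) : ‖M.rsmul x d‖ ≤ ‖x‖ * ‖d‖ := by
  obtain ⟨y, hy⟩ := M.inner_pos x
  have hxy : ‖y‖ = ‖x‖ := by
    have h1 : ‖y‖ * ‖y‖ = ‖x‖ * ‖x‖ := by
      rw [← CStarRing.norm_star_mul_self, ← hy]
      have := M.norm_inner x
      rw [sq] at this
      exact this.symm
    nlinarith [norm_nonneg x, norm_nonneg y]
  have key : M.inner (M.rsmul x d) (M.rsmul x d) = star (y * d) * (y * d) := by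
    rw [inner_rsmul_self, hy, star_mul]
    simp [mul_assoc]
  have h2 : ‖M.rsmul x d‖ ^ 2 = ‖y * d‖ * ‖y * d‖ := by
    rw [M.norm_inner, key, CStarRing.norm_star_mul_self]
  have h3 : ‖y * d‖ ≤ ‖x‖ * ‖d‖ := hxy ▸ norm_mul_le y d
  nlinarith [norm_nonneg (M.rsmul x d), norm_nonneg (y * d),
    mul_nonneg (norm_nonneg x) (norm_nonneg d)]

lemma rsmul_one (x : X) : M.rsmul x 1 = x := by
  apply ext_inner_left M
  intro z
  rw [M.inner_rsmul_right, mul_one]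

lemma cauchy_unit (x0 ζ : X) (h1 : M.inner x0 x0 = 1) : ‖M.inner x0 ζ‖ ≤ ‖ζ‖ := by
  letI := CStarAlgebra.spectralOrder D
  haveI := CStarAlgebra.spectralOrderedRing D
  set d := M.inner x0 ζ with hd
  set w := ζ - M.rsmul x0 d with hw
  have hx0w : M.inner x0 w = 0 := by
    rw [hw, inner_sub_right, M.inner_rsmul_right, h1, one_mul, sub_self]
  have hwd : M.inner w (M.rsmul x0 d) = 0 := by
    rw [M.inner_rsmul_right, ← M.star_inner, hx0w, star_zero, zero_mul]
  have hdw : M.inner (M.rsmul x0 d) w = 0 := by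
    rw [← M.star_inner, hwd, star_zero]
  have hζ : ζ = w + M.rsmul x0 d := by rw [hw]; abel
  have hsplit : M.inner ζ ζ = M.inner w w + star d * d := by
    calc M.inner ζ ζ = M.inner (w + M.rsmul x0 d) (w + M.rsmul x0 d) := by rw [← hζ]
      _ = M.inner w w + M.inner w (M.rsmul x0 d)
          + (M.inner (M.rsmul x0 d) w + M.inner (M.rsmul x0 d) (M.rsmul x0 d)) := by
        rw [inner_add_left, M.inner_add_right, M.inner_add_right]
      _ = M.inner w w + star d * d := by
        rw [hwd, hdw, inner_rsmul_self, h1, mul_one, add_zero, zero_add]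
  have hpos : (0 : D) ≤ M.inner w w := by
    obtain ⟨y, hy⟩ := M.inner_pos w
    rw [hy]; exact star_mul_self_nonneg y
  have hle : star d * d ≤ M.inner ζ ζ := by
    rw [hsplit]; exact le_add_of_nonneg_left hpos
  have hnorm : ‖star d * d‖ ≤ ‖M.inner ζ ζ‖ :=
    CStarAlgebra.norm_le_norm_of_nonneg_of_le (star_mul_self_nonneg d) hle
  have h2 : ‖d‖ * ‖d‖ ≤ ‖ζ‖ * ‖ζ‖ := by
    rw [← CStarRing.norm_star_mul_self]
    have h3 := M.norm_inner ζ
    rw [sq] at h3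
    rw [← h3] at hnorm
    exact hnorm
  nlinarith [norm_nonneg d, norm_nonneg ζ]

end ModAux

section GNSAux

variable {D A : Type u} [CStarAlgebra D] [CStarAlgebra A] {ι : D →⋆ₐ[ℂ] A}
  {E : CondExp D A ι} {X : Type v} [NormedAddCommGroup X] [NormedSpace ℂ X]
  [CompleteSpace X] (G : GNSRep ι E X)

lemma inner_cyc_act (a : A) : G.mod.inner G.cyc (G.rep.act a G.cyc) = E.toMap a := by
  have h := G.inner_cyc 1 a
  rw [G.rep_unital] at h
  simpa using h

lemma inner_cyc_one : G.mod.inner G.cyc G.cyc = 1 := by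
  have h := inner_cyc_act G 1
  rw [G.rep_unital] at h
  have h1 : E.toMap 1 = 1 := by
    have := E.retract 1
    rwa [map_one] at this
  simpa [h1] using h

lemma norm_cyc_le : ‖G.cyc‖ ≤ 1 := by
  have h := G.mod.norm_inner G.cyc
  rw [inner_cyc_one] at h
  have h1 : ‖(1 : D)‖ * ‖(1 : D)‖ = ‖(1 : D)‖ := by
    have := CStarRing.norm_star_mul_self (x := (1 : D))
    simpa using this.symm
  rw [sq] at h
  nlinarith [norm_nonneg G.cyc, norm_nonneg (1 : D), mul_self_nonneg (‖(1 : D)‖ - 1)]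

lemma jones_rsmul (x : X) (d : D) :
    G.jones (G.mod.rsmul x d) = G.mod.rsmul (G.jones x) d := by
  rw [G.jones_apply, G.jones_apply, G.mod.inner_rsmul_right, ← G.mod.rsmul_assoc]

lemma jones_of_mem (ξ : X) (hξ : G.mod.inner G.cyc ξ = 0) : G.jones ξ = 0 := by
  rw [G.jones_apply, hξ]
  exact (G.mod.rsmul G.cyc).map_zero

lemma inner_cyc_act_iota (d : D) (x : X) :
    G.mod.inner G.cyc (G.rep.act (ι d) x) = d * G.mod.inner G.cyc x := by
  have hstar : star (ι (star d)) = ι d := by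
    rw [map_star]; simp
  have h := G.rep.act_star (ι (star d)) G.cyc x
  rw [hstar] at h
  rw [← h, ← G.cyc_rsmul, inner_rsmul_left, star_star]

/-- The operator `T_ξ = θ_{ξ, ξ₀} : ζ ↦ ξ ⬝ ⟨ξ₀, ζ⟩`. -/
def Top (ξ : X) : X →L[ℂ] X := (G.mod.rankOne_exists ξ G.cyc).choose

lemma Top_apply (ξ ζ : X) : Top G ξ ζ = G.mod.rsmul ξ (G.mod.inner G.cyc ζ) :=
  (G.mod.rankOne_exists ξ G.cyc).choose_spec ζ

lemma Top_add (ξ η : X) : Top G (ξ + η) = Top G ξ + Top G η := by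
  ext ζ
  simp only [ContinuousLinearMap.add_apply, Top_apply]
  rw [map_add G.mod.rsmul ξ η]
  rfl

lemma Top_smul (c : ℂ) (ξ : X) : Top G (c • ξ) = c • Top G ξ := by
  ext ζ
  simp only [ContinuousLinearMap.smul_apply, Top_apply]
  rw [map_smul G.mod.rsmul c ξ]
  rfl

lemma Top_sub (ξ η : X) : Top G (ξ - η) = Top G ξ - Top G η := by
  ext ζ
  simp only [ContinuousLinearMap.sub_apply, Top_apply]
  rw [map_sub G.mod.rsmul ξ η]
  rfl

lemma Top_cyc (ξ : X) : Top G ξ G.cyc = ξ := by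
  rw [Top_apply, inner_cyc_one, rsmul_one]

lemma norm_Top (ξ : X) : ‖Top G ξ‖ = ‖ξ‖ := by
  apply le_antisymm
  · apply ContinuousLinearMap.opNorm_le_bound _ (norm_nonneg ξ)
    intro ζ
    rw [Top_apply]
    calc ‖G.mod.rsmul ξ (G.mod.inner G.cyc ζ)‖ ≤ ‖ξ‖ * ‖G.mod.inner G.cyc ζ‖ :=
          norm_rsmul_le G.mod ξ _
      _ ≤ ‖ξ‖ * ‖ζ‖ := by
          exact mul_le_mul_of_nonneg_left (cauchy_unit G.mod G.cyc ζ (inner_cyc_one G))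
            (norm_nonneg ξ)
  · have h := (Top G ξ).le_opNorm G.cyc
    rw [Top_cyc] at h
    calc ‖ξ‖ ≤ ‖Top G ξ‖ * ‖G.cyc‖ := h
      _ ≤ ‖Top G ξ‖ * 1 := mul_le_mul_of_nonneg_left (norm_cyc_le G) (norm_nonneg _)
      _ = ‖Top G ξ‖ := mul_one _

/-- The element `t°(ξ) = 0 ⊕ T_ξ` of `A ⊕ L(X)`. -/
def tmap : Xc G →ₗ[ℂ] A × (X →L[ℂ] X) where
  toFun ξ := ((0 : A), Top G (ξ : X))
  map_add' ξ η := by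
    simp only [Submodule.coe_add, Top_add, Prod.mk_add_mk, add_zero]
  map_smul' c ξ := by
    simp only [SetLike.val_smul, Top_smul, RingHom.id_apply, Prod.smul_mk, smul_zero]

lemma tmap_apply (ξ : Xc G) : tmap G ξ = ((0 : A), Top G (ξ : X)) := rfl

lemma eElem_snd : (eElem G).2 = G.jones := rfl

/-- `(1-e) a e = 0 ⊕ T_{P°(aξ₀)}`. -/
lemma sandwich_eq (a : A) :
    (1 - eElem G) * aElem G a * eElem G
      = ((0 : A), Top G (G.rep.act a G.cyc - G.mod.rsmul G.cyc (E.toMap a))) := by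
  have h1 : ((1 - eElem G) * aElem G a * eElem G).1 = (0 : A) := by
    simp [eElem, aElem]
  have h2 : ((1 - eElem G) * aElem G a * eElem G).2
      = Top G (G.rep.act a G.cyc - G.mod.rsmul G.cyc (E.toMap a)) := by
    have hs : ((1 - eElem G) * aElem G a * eElem G).2
        = (1 - G.jones) * G.rep.act a * G.jones := by simp [eElem, aElem]
    rw [hs]
    ext ζ
    rw [Top_apply]
    simp only [ContinuousLinearMap.mul_apply, ContinuousLinearMap.sub_apply,
      ContinuousLinearMap.one_apply]
    rw [G.jones_apply ζ, G.rep.act_rsmul, jones_rsmul, G.jones_apply (G.rep.act a G.cyc),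
      inner_cyc_act, map_sub G.mod.rsmul]
    rfl
  calc (1 - eElem G) * aElem G a * eElem G
      = (((1 - eElem G) * aElem G a * eElem G).1,
         ((1 - eElem G) * aElem G a * eElem G).2) := rfl
    _ = ((0 : A), Top G (G.rep.act a G.cyc - G.mod.rsmul G.cyc (E.toMap a))) := by
        rw [h1, h2]

lemma sandwich_mem_adjoin (a : A) :
    (1 - eElem G) * aElem G a * eElem G
      ∈ (Algebra.adjoin ℂ (Set.range (aElem G) ∪ {eElem G}) :
          Subalgebra ℂ (A × (X →L[ℂ] X))) := by
  have he : eElem G ∈ (Algebra.adjoin ℂ (Set.range (aElem G) ∪ {eElem G}) :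
      Subalgebra ℂ (A × (X →L[ℂ] X))) :=
    Algebra.subset_adjoin (Set.mem_union_right _ rfl)
  have ha : aElem G a ∈ (Algebra.adjoin ℂ (Set.range (aElem G) ∪ {eElem G}) :
      Subalgebra ℂ (A × (X →L[ℂ] X))) :=
    Algebra.subset_adjoin (Set.mem_union_left _ ⟨a, rfl⟩)
  exact mul_mem (mul_mem (sub_mem (one_mem _) he) ha) he

lemma Top_mem (ξ : X) (hξ : G.mod.inner G.cyc ξ = 0) :
    (((0 : A), Top G ξ) : A × (X →L[ℂ] X)) ∈ calB G := by
  rw [calB, Metric.mem_closure_iff]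
  intro ε hε
  obtain ⟨y, ⟨a, rfl⟩, hdist⟩ := G.cyclic.exists_dist_lt ξ (show 0 < ε / 3 by linarith)
  refine ⟨(1 - eElem G) * aElem G a * eElem G, sandwich_mem_adjoin G a, ?_⟩
  rw [sandwich_eq]
  set ξ' := G.rep.act a G.cyc - G.mod.rsmul G.cyc (E.toMap a) with hξ'
  have hdd : dist (((0 : A), Top G ξ) : A × (X →L[ℂ] X)) ((0 : A), Top G ξ') = ‖ξ - ξ'‖ := by
    rw [dist_eq_norm]
    have : (((0 : A), Top G ξ) : A × (X →L[ℂ] X)) - ((0 : A), Top G ξ')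
        = ((0 : A), Top G (ξ - ξ')) := by
      rw [Prod.mk_sub_mk, sub_zero, ← Top_sub]
    rw [this, Prod.norm_def]
    simp only [norm_zero]
    rw [max_eq_right (norm_nonneg _), norm_Top]
  rw [hdd]
  -- ‖ξ - ξ'‖ ≤ 2 * ‖act a cyc - ξ‖ < ε
  have hEa : E.toMap a = G.mod.inner G.cyc (G.rep.act a G.cyc - ξ) := by
    rw [inner_sub_right, hξ, sub_zero, inner_cyc_act]
  have hsplit : ξ - ξ' = (ξ - G.rep.act a G.cyc) + G.mod.rsmul G.cyc (E.toMap a) := by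
    rw [hξ']; abel
  have hb1 : ‖G.mod.rsmul G.cyc (E.toMap a)‖ ≤ ‖G.rep.act a G.cyc - ξ‖ := by
    calc ‖G.mod.rsmul G.cyc (E.toMap a)‖ ≤ ‖G.cyc‖ * ‖E.toMap a‖ :=
          norm_rsmul_le G.mod _ _
      _ ≤ 1 * ‖E.toMap a‖ :=
          mul_le_mul_of_nonneg_right (norm_cyc_le G) (norm_nonneg _)
      _ = ‖E.toMap a‖ := one_mul _
      _ ≤ ‖G.rep.act a G.cyc - ξ‖ := by
          rw [hEa]
          exact cauchy_unit G.mod G.cyc _ (inner_cyc_one G)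
  have hnn : ‖ξ - G.rep.act a G.cyc‖ = dist (G.rep.act a G.cyc) ξ := by
    rw [dist_eq_norm, ← norm_neg]; congr 1; abel
  have hnn2 : ‖G.rep.act a G.cyc - ξ‖ = dist (G.rep.act a G.cyc) ξ := by
    rw [dist_eq_norm]
  calc ‖ξ - ξ'‖ ≤ ‖ξ - G.rep.act a G.cyc‖ + ‖G.mod.rsmul G.cyc (E.toMap a)‖ := by
        rw [hsplit]; exact norm_add_le _ _
    _ ≤ dist (G.rep.act a G.cyc) ξ + dist (G.rep.act a G.cyc) ξ := by
        rw [hnn]; exact add_le_add_right (hnn2 ▸ hb1) _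
    _ < ε := by
        rw [dist_comm] at hdist
        simp only at hdist
        linarith

lemma fix_eq (ξ : X) (hξ : G.mod.inner G.cyc ξ = 0) :
    (1 - eElem G) * (((0 : A), Top G ξ) : A × (X →L[ℂ] X)) * eElem G
      = ((0 : A), Top G ξ) := by
  have h1 : ((1 - eElem G) * (((0 : A), Top G ξ) : A × (X →L[ℂ] X)) * eElem G).1
      = (0 : A) := by simp [eElem]
  have h2 : ((1 - eElem G) * (((0 : A), Top G ξ) : A × (X →L[ℂ] X)) * eElem G).2
      = Top G ξ := by
    have hs : ((1 - eElem G) * (((0 : A), Top G ξ) : A × (X →L[ℂ] X)) * eElem G).2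
        = (1 - G.jones) * Top G ξ * G.jones := by simp [eElem]
    rw [hs]
    ext ζ
    simp only [ContinuousLinearMap.mul_apply, ContinuousLinearMap.sub_apply,
      ContinuousLinearMap.one_apply]
    have hTj : Top G ξ (G.jones ζ) = Top G ξ ζ := by
      rw [Top_apply, Top_apply, G.jones_apply, G.mod.inner_rsmul_right, inner_cyc_one,
        one_mul]
    rw [hTj, Top_apply, jones_rsmul, jones_of_mem G ξ hξ]
    have : G.mod.rsmul (0 : X) (G.mod.inner G.cyc ζ) = 0 := by
      rw [map_zero G.mod.rsmul]; rfl
    rw [this, sub_zero]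
  calc (1 - eElem G) * (((0 : A), Top G ξ) : A × (X →L[ℂ] X)) * eElem G
      = (((1 - eElem G) * (((0 : A), Top G ξ) : A × (X →L[ℂ] X)) * eElem G).1,
         ((1 - eElem G) * (((0 : A), Top G ξ) : A × (X →L[ℂ] X)) * eElem G).2) := rfl
    _ = ((0 : A), Top G ξ) := by rw [h1, h2]

lemma ae_eq (a : A) :
    aElem G a * eElem G = (((0 : A), Top G (G.rep.act a G.cyc)) : A × (X →L[ℂ] X)) := by
  have h1 : (aElem G a * eElem G).1 = (0 : A) := by simp [eElem, aElem]
  have h2 : (aElem G a * eElem G).2 = Top G (G.rep.act a G.cyc) := by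
    have hs : (aElem G a * eElem G).2 = G.rep.act a * G.jones := rfl
    rw [hs]
    ext ζ
    simp only [ContinuousLinearMap.mul_apply]
    rw [G.jones_apply, G.rep.act_rsmul, Top_apply]
  calc aElem G a * eElem G = ((aElem G a * eElem G).1, (aElem G a * eElem G).2) := rfl
    _ = ((0 : A), Top G (G.rep.act a G.cyc)) := by rw [h1, h2]

/-- The operator `S_ξ = θ_{ξ₀, ξ} : ζ ↦ ξ₀ ⬝ ⟨ξ, ζ⟩`, the adjoint of `T_ξ`. -/
def Sop (ξ : X) : X →L[ℂ] X := (G.mod.rankOne_exists G.cyc ξ).choose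

lemma Sop_apply (ξ ζ : X) : Sop G ξ ζ = G.mod.rsmul G.cyc (G.mod.inner ξ ζ) :=
  (G.mod.rankOne_exists G.cyc ξ).choose_spec ζ

lemma adjointable_Top (ξ : X) : G.mod.Adjointable (Top G ξ) := by
  refine ⟨Sop G ξ, fun x y => ?_⟩
  rw [Top_apply, inner_rsmul_left, G.mod.star_inner, Sop_apply, G.mod.inner_rsmul_right]

lemma adj_Top (ξ : X) : G.mod.adj (Top G ξ) = Sop G ξ := by
  have h := adjointable_Top G ξ
  have hd : G.mod.adj (Top G ξ) = h.choose := by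
    unfold HilbMod.adj
    exact dif_pos h
  rw [hd]
  ext y
  apply ext_inner_left G.mod
  intro z
  rw [← h.choose_spec z y, Top_apply, inner_rsmul_left, G.mod.star_inner, Sop_apply,
    G.mod.inner_rsmul_right]

/-- The right-`D`-module property for elements of `A ⊕ L(X)`. -/
def Dmod (p : A × (X →L[ℂ] X)) : Prop :=
  ∀ (x : X) (d : D), p.2 (G.mod.rsmul x d) = G.mod.rsmul (p.2 x) d

lemma dmod_mul {p q : A × (X →L[ℂ] X)} (hp : Dmod G p) (hq : Dmod G q) :
    Dmod G (p * q) := by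
  intro x d
  have hs : (p * q).2 = p.2 * q.2 := rfl
  rw [hs, ContinuousLinearMap.mul_apply, ContinuousLinearMap.mul_apply, hq, hp]

lemma dmod_one_sub_e : Dmod G (1 - eElem G) := by
  intro x d
  have hs : ((1 : A × (X →L[ℂ] X)) - eElem G).2 = 1 - G.jones := rfl
  rw [hs]
  simp only [ContinuousLinearMap.sub_apply, ContinuousLinearMap.one_apply]
  rw [jones_rsmul, map_sub G.mod.rsmul]
  rfl

lemma dmod_adjoin (p : A × (X →L[ℂ] X))
    (hp : p ∈ (Algebra.adjoin ℂ (Set.range (aElem G) ∪ {eElem G}) :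
      Subalgebra ℂ (A × (X →L[ℂ] X)))) : Dmod G p := by
  induction hp using Algebra.adjoin_induction with
  | mem q hq =>
      rcases hq with ⟨a, rfl⟩ | hq
      · exact fun x d => G.rep.act_rsmul a x d
      · have hqe : q = eElem G := hq
        subst hqe
        exact fun x d => jones_rsmul G x d
  | algebraMap r =>
      intro x d
      have h2 : (algebraMap ℂ (A × (X →L[ℂ] X)) r).2 = algebraMap ℂ (X →L[ℂ] X) r := rfl
      rw [h2, Algebra.algebraMap_eq_smul_one]
      simp only [ContinuousLinearMap.smul_apply, ContinuousLinearMap.one_apply]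
      rw [map_smul G.mod.rsmul r x]
      rfl
  | add p q hp hq ihp ihq =>
      intro x d
      have h2 : (p + q).2 = p.2 + q.2 := rfl
      rw [h2]
      simp only [ContinuousLinearMap.add_apply]
      rw [ihp x d, ihq x d, ← LinearMap.add_apply, ← map_add G.mod.rsmul]
  | mul p q hp hq ihp ihq =>
      exact dmod_mul G ihp ihq

open Filter Topology in
lemma dmod_calB (p : A × (X →L[ℂ] X)) (hp : p ∈ calB G) : Dmod G p := by
  intro x d
  obtain ⟨u, hu, hlim⟩ := mem_closure_iff_seq_limit.mp hp
  have hD : ∀ n, (u n).2 (G.mod.rsmul x d) = G.mod.rsmul ((u n).2 x) d := fun n =>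
    dmod_adjoin G (u n) (hu n) x d
  have hsnd : Tendsto (fun n => (u n).2) atTop (𝓝 p.2) :=
    ((continuous_snd).tendsto p).comp hlim
  have ev : ∀ w : X, Tendsto (fun n => (u n).2 w) atTop (𝓝 (p.2 w)) := fun w =>
    ((ContinuousLinearMap.apply ℂ X w).continuous.tendsto p.2).comp hsnd
  have h2 : Tendsto (fun n => G.mod.rsmul ((u n).2 x) d) atTop
      (𝓝 (G.mod.rsmul (p.2 x) d)) := by
    rw [tendsto_iff_norm_sub_tendsto_zero]
    have hb : ∀ n, ‖G.mod.rsmul ((u n).2 x) d - G.mod.rsmul (p.2 x) d‖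
        ≤ ‖(u n).2 x - p.2 x‖ * ‖d‖ := by
      intro n
      have hr : G.mod.rsmul ((u n).2 x) d - G.mod.rsmul (p.2 x) d
          = G.mod.rsmul ((u n).2 x - p.2 x) d := by
        rw [map_sub G.mod.rsmul]; rfl
      rw [hr]; exact norm_rsmul_le G.mod _ d
    have hx0 : Tendsto (fun n => ‖(u n).2 x - p.2 x‖ * ‖d‖) atTop (𝓝 0) := by
      have h0 : Tendsto (fun n => ‖(u n).2 x - p.2 x‖) atTop (𝓝 0) :=
        tendsto_iff_norm_sub_tendsto_zero.mp (ev x)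
      simpa using h0.mul_const ‖d‖
    exact squeeze_zero (fun n => norm_nonneg _) hb hx0
  have h1 : Tendsto (fun n => (u n).2 (G.mod.rsmul x d)) atTop
      (𝓝 (p.2 (G.mod.rsmul x d))) := ev _
  have h1' : Tendsto (fun n => (u n).2 (G.mod.rsmul x d)) atTop
      (𝓝 (G.mod.rsmul (p.2 x) d)) := by
    have hfun : (fun n => (u n).2 (G.mod.rsmul x d))
        = fun n => G.mod.rsmul ((u n).2 x) d := funext hD
    rw [hfun]; exact h2
  exact tendsto_nhds_unique h1 h1'

end GNSAux

end Stmt4Aux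

open Stmt4Aux

theorem stmt_4 {D A : Type u} [CStarAlgebra D] [CStarAlgebra A] (ι : D →⋆ₐ[ℂ] A)
    (hι : Function.Injective ι) (E : CondExp D A ι) (hE : E.Nondeg)
    (X : Type v) [NormedAddCommGroup X] [NormedSpace ℂ X] [CompleteSpace X]
    (G : GNSRep ι E X) :
    ∃ tc : Xc G →ₗ[ℂ] A × (X →L[ℂ] X),
      -- `t°` is isometric
      (∀ ξ : Xc G, ‖tc ξ‖ = ‖(ξ : X)‖) ∧
      -- `t°` maps into `(1-e)𝓑e`
      (∀ ξ : Xc G, ∃ z ∈ calB G, tc ξ = (1 - eElem G) * z * eElem G) ∧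
      -- `t°(aξ₀) = ae = (1-e)ae` for `a ∈ A° = ker E`
      (∀ (a : A), E.toMap a = 0 → ∀ ξ : Xc G, (ξ : X) = G.rep.act a G.cyc →
        tc ξ = aElem G a * eElem G ∧
        tc ξ = (1 - eElem G) * aElem G a * eElem G) ∧
      -- `t°(ξ)* t°(η) = ⟨ξ, η⟩ e`
      (∀ ξ η : Xc G,
        pstar G (tc ξ) * tc η = dElem G (G.mod.inner (ξ : X) (η : X)) * eElem G) ∧
      -- `t°(b ξ d) = b t°(ξ) d` for `b ∈ B` (acting on `X°` via `A ⊕ L(X°) → L(X°)`)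
      (∀ b ∈ Bset G, ∀ (ξ ζ : Xc G) (d : D),
        (ζ : X) = G.mod.rsmul (b.2 (ξ : X)) d → tc ζ = b * tc ξ * dElem G d) := by
  refine ⟨tmap G, ?_, ?_, ?_, ?_, ?_⟩
  · -- isometry
    intro ξ
    rw [tmap_apply, Prod.norm_def]
    simp only [norm_zero]
    rw [max_eq_right (norm_nonneg _), norm_Top]
  · -- maps into (1-e)𝓑e
    intro ξ
    have hξ : G.mod.inner G.cyc (ξ : X) = 0 := ξ.2
    refine ⟨tmap G ξ, ?_, ?_⟩
    · rw [tmap_apply]; exact Top_mem G (ξ : X) hξ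
    · rw [tmap_apply]; exact (fix_eq G (ξ : X) hξ).symm
  · -- t°(aξ₀) = ae = (1-e)ae for a ∈ ker E
    intro a ha ξ hx
    have h1 : tmap G ξ = aElem G a * eElem G := by
      rw [tmap_apply, hx]
      exact (ae_eq G a).symm
    refine ⟨h1, ?_⟩
    rw [h1, sandwich_eq, ae_eq, ha]
    have hz : G.mod.rsmul G.cyc (0 : D) = 0 := by
      rw [(G.mod.rsmul G.cyc).map_zero]
    rw [hz, sub_zero]
  · -- t°(ξ)* t°(η) = ⟨ξ,η⟩ e
    intro ξ η
    rw [tmap_apply, tmap_apply]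
    have hp : pstar G (((0 : A), Top G (ξ : X)) : A × (X →L[ℂ] X))
        = ((0 : A), Sop G (ξ : X)) := by
      rw [pstar, star_zero, adj_Top]
    rw [hp]
    have h1 : ((((0 : A), Sop G (ξ : X)) : A × (X →L[ℂ] X))
        * ((0 : A), Top G (η : X))).1
        = (dElem G (G.mod.inner (ξ : X) (η : X)) * eElem G).1 := by
      simp [dElem, aElem, eElem]
    have h2 : ((((0 : A), Sop G (ξ : X)) : A × (X →L[ℂ] X))
        * ((0 : A), Top G (η : X))).2
        = (dElem G (G.mod.inner (ξ : X) (η : X)) * eElem G).2 := by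
      have hs1 : ((((0 : A), Sop G (ξ : X)) : A × (X →L[ℂ] X))
          * ((0 : A), Top G (η : X))).2 = Sop G (ξ : X) * Top G (η : X) := rfl
      have hs2 : (dElem G (G.mod.inner (ξ : X) (η : X)) * eElem G).2
          = G.rep.act (ι (G.mod.inner (ξ : X) (η : X))) * G.jones := rfl
      rw [hs1, hs2]
      ext ζ
      simp only [ContinuousLinearMap.mul_apply]
      rw [Top_apply, Sop_apply, G.mod.inner_rsmul_right, G.jones_apply, G.rep.act_rsmul,
        ← G.cyc_rsmul, ← G.mod.rsmul_assoc]
    calc (((0 : A), Sop G (ξ : X)) : A × (X →L[ℂ] X)) * ((0 : A), Top G (η : X))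
        = (((((0 : A), Sop G (ξ : X)) : A × (X →L[ℂ] X)) * ((0 : A), Top G (η : X))).1,
           ((((0 : A), Sop G (ξ : X)) : A × (X →L[ℂ] X)) * ((0 : A), Top G (η : X))).2)
          := rfl
      _ = dElem G (G.mod.inner (ξ : X) (η : X)) * eElem G := by
          rw [h1, h2]
  · -- t°(bξd) = b t°(ξ) d
    rintro b ⟨z, hz, rfl⟩ ξ ζ d hζ
    set b := (1 - eElem G) * z * (1 - eElem G) with hb
    have hDb : Dmod G b :=
      dmod_mul G (dmod_mul G (dmod_one_sub_e G) (dmod_calB G z hz)) (dmod_one_sub_e G)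
    rw [tmap_apply, tmap_apply]
    have h1 : ((0 : A) : A) = (b * (((0 : A), Top G (ξ : X)) : A × (X →L[ℂ] X))
        * dElem G d).1 := by
      simp [dElem, aElem]
    have h2 : Top G (ζ : X) = (b * (((0 : A), Top G (ξ : X)) : A × (X →L[ℂ] X))
        * dElem G d).2 := by
      have hs : (b * (((0 : A), Top G (ξ : X)) : A × (X →L[ℂ] X)) * dElem G d).2
          = b.2 * Top G (ξ : X) * G.rep.act (ι d) := rfl
      rw [hs]
      ext x
      simp only [ContinuousLinearMap.mul_apply]
      rw [Top_apply, Top_apply, inner_cyc_act_iota, hζ, G.mod.rsmul_assoc,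
        hDb (ξ : X) (d * G.mod.inner G.cyc x)]
    calc (((0 : A), Top G (ζ : X)) : A × (X →L[ℂ] X))
        = ((b * (((0 : A), Top G (ξ : X)) : A × (X →L[ℂ] X)) * dElem G d).1,
           (b * (((0 : A), Top G (ξ : X)) : A × (X →L[ℂ] X)) * dElem G d).2) := by
          rw [← h1, ← h2]
      _ = b * (((0 : A), Top G (ξ : X)) : A × (X →L[ℂ] X)) * dElem G d := rfl


end
end
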